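/- arXiv:1104.3307 — 5 statements merged into one kernel-verified Lean document; each statement's English description precedes it below -/
import Mathlib

section
/- In ℝ^10 with coordinates indexed by 2-element subsets of {1,…,5}, define v(I)_{jk} = 1 if |I ∩ {j,k}| = 1 and 0 otherwise, and d_a = v({a}) for a = 1,…,5. Then the solution set in ℝ^11 of the system a_1·v({2,3}) + a_2·v({2,4}) + a_3·v({2,5}) + a_4·v({3,4}) + a_5·v({3,5}) + a_6·v({4,5}) = a_7·d_1 + a_8·d_2 + a_9·d_3 + a_10·d_4 + a_11·d_5 is exactly the set of scalar multiples of (1,1,1,1,1,1,1,2,2,2,2). -/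
/-- Index type: 2-element subsets of {1,…,n} (modeled as `Fin n`, 0-based). -/
def Pair (n : ℕ) := {s : Finset (Fin n) // s.card = 2}

noncomputable instance (n : ℕ) : Fintype (Pair n) := by unfold Pair; infer_instance

/-- The vector v(I): coordinate at the pair {j,k} is 1 iff |I ∩ {j,k}| = 1. -/
def v (n : ℕ) (I : Finset (Fin n)) : Pair n → ℝ :=
  fun s => if (I ∩ s.val).card = 1 then 1 else 0

/-- d_a = v({a}). -/
def d (n : ℕ) (a : Fin n) : Pair n → ℝ := v n {a}

lemma vv0 : (![1, 1, 1, 1, 1, 1, 1, 2, 2, 2, 2] : Fin 11 → ℝ) 0 = 1 := rfl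
lemma vv1 : (![1, 1, 1, 1, 1, 1, 1, 2, 2, 2, 2] : Fin 11 → ℝ) 1 = 1 := rfl
lemma vv2 : (![1, 1, 1, 1, 1, 1, 1, 2, 2, 2, 2] : Fin 11 → ℝ) 2 = 1 := rfl
lemma vv3 : (![1, 1, 1, 1, 1, 1, 1, 2, 2, 2, 2] : Fin 11 → ℝ) 3 = 1 := rfl
lemma vv4 : (![1, 1, 1, 1, 1, 1, 1, 2, 2, 2, 2] : Fin 11 → ℝ) 4 = 1 := rfl
lemma vv5 : (![1, 1, 1, 1, 1, 1, 1, 2, 2, 2, 2] : Fin 11 → ℝ) 5 = 1 := rfl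
lemma vv6 : (![1, 1, 1, 1, 1, 1, 1, 2, 2, 2, 2] : Fin 11 → ℝ) 6 = 1 := rfl
lemma vv7 : (![1, 1, 1, 1, 1, 1, 1, 2, 2, 2, 2] : Fin 11 → ℝ) 7 = 2 := rfl
lemma vv8 : (![1, 1, 1, 1, 1, 1, 1, 2, 2, 2, 2] : Fin 11 → ℝ) 8 = 2 := rfl
lemma vv9 : (![1, 1, 1, 1, 1, 1, 1, 2, 2, 2, 2] : Fin 11 → ℝ) 9 = 2 := rfl
lemma vv10 : (![1, 1, 1, 1, 1, 1, 1, 2, 2, 2, 2] : Fin 11 → ℝ) 10 = 2 := rfl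

/-- Local irreducibility of the Psi-class ψ₁ (ends 1,…,5 modeled as 0,…,4 : Fin 5). -/
theorem local_irreducibility_psi :
    {a : Fin 11 → ℝ |
        a 0 • v 5 {1, 2} + a 1 • v 5 {1, 3} + a 2 • v 5 {1, 4}
          + a 3 • v 5 {2, 3} + a 4 • v 5 {2, 4} + a 5 • v 5 {3, 4}
          = a 6 • d 5 0 + a 7 • d 5 1 + a 8 • d 5 2 + a 9 • d 5 3 + a 10 • d 5 4}
      = {a : Fin 11 → ℝ | ∃ c : ℝ, a = c • ![1, 1, 1, 1, 1, 1, 1, 2, 2, 2, 2]} := by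
  ext a
  simp only [Set.mem_setOf_eq]
  constructor
  · intro h
    have e1 := congrFun h (@id (Pair 5) ⟨{0,1}, by decide⟩)
    have e2 := congrFun h (@id (Pair 5) ⟨{0,2}, by decide⟩)
    have e3 := congrFun h (@id (Pair 5) ⟨{0,3}, by decide⟩)
    have e4 := congrFun h (@id (Pair 5) ⟨{0,4}, by decide⟩)
    have e5 := congrFun h (@id (Pair 5) ⟨{1,2}, by decide⟩)
    have e6 := congrFun h (@id (Pair 5) ⟨{1,3}, by decide⟩)
    have e7 := congrFun h (@id (Pair 5) ⟨{1,4}, by decide⟩)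
    have e8 := congrFun h (@id (Pair 5) ⟨{2,3}, by decide⟩)
    have e9 := congrFun h (@id (Pair 5) ⟨{2,4}, by decide⟩)
    have e10 := congrFun h (@id (Pair 5) ⟨{3,4}, by decide⟩)
    simp (config := { decide := true }) only [v, d, Pi.add_apply, Pi.smul_apply,
      smul_eq_mul, if_true, if_false, mul_one, mul_zero, add_zero,
      zero_add] at e1 e2 e3 e4 e5 e6 e7 e8 e9 e10
    refine ⟨a 0, ?_⟩
    funext i
    fin_cases i <;> simp [vv0, vv1, vv2, vv3, vv4, vv5, vv6, vv7, vv8, vv9, vv10] <;> linarith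
  · rintro ⟨c, rfl⟩
    funext s
    obtain ⟨s, hs⟩ := s
    rw [Finset.card_eq_two] at hs
    obtain ⟨j, k, hjk, rfl⟩ := hs
    fin_cases j <;> fin_cases k <;>
      simp (config := { decide := true }) only [v, d, Pi.add_def, Pi.smul_def, smul_eq_mul,
        vv0, vv1, vv2, vv3, vv4, vv5, vv6, vv7, vv8, vv9, vv10, if_true, if_false] <;>
      first | (exact absurd rfl hjk) | ring
end

section
/- In ℝ^10 with coordinates indexed by 2-element subsets of {1,…,5}, define v(I)_{jk} = 1 if |I ∩ {j,k}| = 1 and 0 otherwise, and d_a = v({a}). Then the set {v({1,2}), v({3,4}), v({3,5}), v({4,5})} is minimally dependent modulo the span L of d_1,…,d_5: some nontrivial linear combination of these four vectors lies in L, but no nontrivial linear combination of any proper subset of them lies in L. -/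
/-- The four rays of the vital divisor D^{{1,2}} in M_{0,5} (ends modeled 0-based):
w 0 = v({1,2}), w 1 = v({3,4}), w 2 = v({3,5}), w 3 = v({4,5}). -/
def w : Fin 4 → (Pair 5 → ℝ) := ![v 5 {0, 1}, v 5 {2, 3}, v 5 {2, 4}, v 5 {3, 4}]

set_option linter.unreachableTactic false in
set_option linter.unusedTactic false in
lemma key_relation :
    (∑ i, (![-1,1,1,1] : Fin 4 → ℝ) i • w i) = d 5 2 + d 5 3 + d 5 4 := by
  funext s
  simp only [Finset.sum_apply, Pi.smul_apply, Pi.add_apply, Fin.sum_univ_four, d]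
  obtain ⟨sv, hs⟩ := s
  obtain ⟨x, y, hxy, rfl⟩ := Finset.card_eq_two.mp hs
  fin_cases x <;> fin_cases y <;>
    first
    | exact absurd rfl hxy
    | (simp (config := { decide := true }) only [w, v, Matrix.cons_val_zero, Matrix.cons_val_one,
        Matrix.cons_val_two, Matrix.cons_val_three, Matrix.vecHead, Matrix.vecTail, Function.comp_apply,
        Fin.succ_zero_eq_one, Fin.succ_one_eq_two, if_true, if_false] <;> norm_num)

/-- The set {v({1,2}), v({3,4}), v({3,5}), v({4,5})} is minimally dependent modulo
the lineality space L = span(d₁,…,d₅). -/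
theorem vital_divisor_minimally_dependent :
    (∃ c : Fin 4 → ℝ, c ≠ 0 ∧
        ∑ i, c i • w i ∈ Submodule.span ℝ (Set.range (d 5))) ∧
    ∀ S : Finset (Fin 4), S ≠ Finset.univ →
      ∀ c : Fin 4 → ℝ, (∀ i ∉ S, c i = 0) →
        ∑ i, c i • w i ∈ Submodule.span ℝ (Set.range (d 5)) → c = 0 := by
  constructor
  · refine ⟨![-1,1,1,1], ?_, ?_⟩
    · intro h
      have := congrFun h 1
      simp at this
    · rw [key_relation]
      have h2 : d 5 2 ∈ Submodule.span ℝ (Set.range (d 5)) :=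
        Submodule.subset_span ⟨2, rfl⟩
      have h3 : d 5 3 ∈ Submodule.span ℝ (Set.range (d 5)) :=
        Submodule.subset_span ⟨3, rfl⟩
      have h4 : d 5 4 ∈ Submodule.span ℝ (Set.range (d 5)) :=
        Submodule.subset_span ⟨4, rfl⟩
      exact Submodule.add_mem _ (Submodule.add_mem _ h2 h3) h4
  · intro S hS c hsupp hmem
    rw [Submodule.mem_span_range_iff_exists_fun ℝ] at hmem
    obtain ⟨a, ha⟩ := hmem
    have e01 := congrFun ha ⟨{0,1}, by decide⟩
    have e02 := congrFun ha ⟨{0,2}, by decide⟩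
    have e03 := congrFun ha ⟨{0,3}, by decide⟩
    have e04 := congrFun ha ⟨{0,4}, by decide⟩
    have e12 := congrFun ha ⟨{1,2}, by decide⟩
    have e23 := congrFun ha ⟨{2,3}, by decide⟩
    have e24 := congrFun ha ⟨{2,4}, by decide⟩
    have e34 := congrFun ha ⟨{3,4}, by decide⟩
    simp (config := { decide := true }) only [Finset.sum_apply, Pi.smul_apply, Pi.add_def, Pi.smul_def,
      Fin.sum_univ_five, Fin.sum_univ_four, d, v, w, Matrix.cons_val_zero,
      Matrix.cons_val_one, Matrix.head_cons, Matrix.cons_val_two,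
      Matrix.cons_val_three, Matrix.tail_cons, smul_eq_mul, if_true, if_false,
      mul_one, mul_zero, add_zero, zero_add] at e01 e02 e03 e04 e12 e23 e24 e34
    obtain ⟨i, hi⟩ := Finset.exists_of_ssubset (Finset.ssubset_univ_iff.mpr hS) |>.imp (fun i h => h.2)
    have hci := hsupp i hi
    funext j
    fin_cases i <;> fin_cases j <;> simp_all <;> linarith
end

section
/- In ℝ^15 with coordinates indexed by 2-element subsets of {1,…,6}, define v(I)_{jk} = 1 if |I ∩ {j,k}| = 1 and 0 otherwise, and d_a = v({a}). Let L' be the span of d_1,…,d_6 together with v({1,2,3}). Then for (a_1,…,a_6) ∈ ℝ^6, the combination a_1·v({1,2}) + a_2·v({1,3}) + a_3·v({2,3}) + a_4·v({4,5}) + a_5·v({4,6}) + a_6·v({5,6}) lies in L' if and only if a_1 = a_2 = a_3 and a_4 = a_5 = a_6. -/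
namespace VitalAux

def pr (s : Finset (Fin 6)) (h : s.card = 2) : (Pair 6 → ℝ) →ₗ[ℝ] ℝ where
  toFun := fun f => f ⟨s, h⟩
  map_add' := fun _ _ => rfl
  map_smul' := fun _ _ => rfl

@[simp] lemma pr_apply (s : Finset (Fin 6)) (h : s.card = 2) (f : Pair 6 → ℝ) :
    pr s h f = f ⟨s, h⟩ := rfl

lemma span_eval (φ : (Pair 6 → ℝ) →ₗ[ℝ] ℝ)
    (h0 : ∀ i, φ (d 6 i) = 0) (h1 : φ (v 6 {0,1,2}) = 0)
    {w : Pair 6 → ℝ}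
    (hw : w ∈ Submodule.span ℝ (Set.range (d 6) ∪ {v 6 {0, 1, 2}})) :
    φ w = 0 := by
  have hsub : Set.range (d 6) ∪ {v 6 {0, 1, 2}} ⊆ (LinearMap.ker φ : Submodule ℝ _) := by
    rintro x (⟨i, rfl⟩ | rfl)
    · exact h0 i
    · exact h1
  exact (Submodule.span_le.mpr hsub) hw

lemma sum012 : v 6 {0,1} + v 6 {0,2} + v 6 {1,2} = d 6 0 + d 6 1 + d 6 2 + v 6 {0,1,2} := by
  funext s
  simp only [Pi.add_apply]
  obtain ⟨s, hs⟩ := s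
  rcases Finset.card_eq_two.mp hs with ⟨x, y, hxy, rfl⟩
  simp only [Pi.add_apply, v, d]
  fin_cases x <;> fin_cases y <;> simp_all

lemma sum345 : v 6 {3,4} + v 6 {3,5} + v 6 {4,5} = d 6 3 + d 6 4 + d 6 5 + v 6 {0,1,2} := by
  funext s
  simp only [Pi.add_apply]
  obtain ⟨s, hs⟩ := s
  rcases Finset.card_eq_two.mp hs with ⟨x, y, hxy, rfl⟩
  simp only [Pi.add_apply, v, d]
  fin_cases x <;> fin_cases y <;> simp_all

def φ₁ : (Pair 6 → ℝ) →ₗ[ℝ] ℝ :=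
  pr {0,1} (by decide) + pr {2,3} (by decide) - pr {0,2} (by decide) - pr {1,3} (by decide)
def φ₂ : (Pair 6 → ℝ) →ₗ[ℝ] ℝ :=
  pr {0,2} (by decide) + pr {1,3} (by decide) - pr {1,2} (by decide) - pr {0,3} (by decide)
def φ₃ : (Pair 6 → ℝ) →ₗ[ℝ] ℝ :=
  pr {3,4} (by decide) + pr {0,5} (by decide) - pr {3,5} (by decide) - pr {0,4} (by decide)
def φ₄ : (Pair 6 → ℝ) →ₗ[ℝ] ℝ :=
  pr {3,5} (by decide) + pr {0,4} (by decide) - pr {4,5} (by decide) - pr {0,3} (by decide)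

lemma φ₁_van : (∀ i, φ₁ (d 6 i) = 0) ∧ φ₁ (v 6 {0,1,2}) = 0 := by
  constructor
  · intro i
    fin_cases i <;>
      simp (config := { decide := true }) [φ₁, pr, d, v, LinearMap.sub_apply,
        LinearMap.add_apply, LinearMap.proj_apply]
  · simp (config := { decide := true }) [φ₁, pr, v, LinearMap.sub_apply,
      LinearMap.add_apply, LinearMap.proj_apply]

lemma φ₂_van : (∀ i, φ₂ (d 6 i) = 0) ∧ φ₂ (v 6 {0,1,2}) = 0 := by
  constructor
  · intro i
    fin_cases i <;>
      simp (config := { decide := true }) [φ₂, pr, d, v, LinearMap.sub_apply,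
        LinearMap.add_apply]
  · simp (config := { decide := true }) [φ₂, pr, v, LinearMap.sub_apply,
      LinearMap.add_apply]

lemma φ₃_van : (∀ i, φ₃ (d 6 i) = 0) ∧ φ₃ (v 6 {0,1,2}) = 0 := by
  constructor
  · intro i
    fin_cases i <;>
      simp (config := { decide := true }) [φ₃, pr, d, v, LinearMap.sub_apply,
        LinearMap.add_apply]
  · simp (config := { decide := true }) [φ₃, pr, v, LinearMap.sub_apply,
      LinearMap.add_apply]

lemma φ₄_van : (∀ i, φ₄ (d 6 i) = 0) ∧ φ₄ (v 6 {0,1,2}) = 0 := by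
  constructor
  · intro i
    fin_cases i <;>
      simp (config := { decide := true }) [φ₄, pr, d, v, LinearMap.sub_apply,
        LinearMap.add_apply]
  · simp (config := { decide := true }) [φ₄, pr, v, LinearMap.sub_apply,
      LinearMap.add_apply]

lemma add_apply' (f g : Pair 6 → ℝ) (s : Finset (Fin 6)) (h : s.card = 2) :
    (f + g) ⟨s, h⟩ = f ⟨s, h⟩ + g ⟨s, h⟩ := rfl

lemma smul_apply' (c : ℝ) (f : Pair 6 → ℝ) (s : Finset (Fin 6)) (h : s.card = 2) :
    (c • f) ⟨s, h⟩ = c * f ⟨s, h⟩ := rfl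

end VitalAux


/-- Non-local-irreducibility computation for D^{{1,2,3}} in M_{0,6}
(ends 1,…,6 modeled as 0,…,5 : Fin 6). L'\'' is spanned by d₁,…,d₆ and v({1,2,3}). -/
theorem vital_divisor_M06_weights (a : Fin 6 → ℝ) :
    (a 0 • v 6 {0, 1} + a 1 • v 6 {0, 2} + a 2 • v 6 {1, 2}
        + a 3 • v 6 {3, 4} + a 4 • v 6 {3, 5} + a 5 • v 6 {4, 5}
      ∈ Submodule.span ℝ (Set.range (d 6) ∪ {v 6 {0, 1, 2}}))
    ↔ (a 0 = a 1 ∧ a 1 = a 2 ∧ a 3 = a 4 ∧ a 4 = a 5) := by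
  open VitalAux in
  constructor
  · intro h
    have e1 := span_eval φ₁ φ₁_van.1 φ₁_van.2 h
    have e2 := span_eval φ₂ φ₂_van.1 φ₂_van.2 h
    have e3 := span_eval φ₃ φ₃_van.1 φ₃_van.2 h
    have e4 := span_eval φ₄ φ₄_van.1 φ₄_van.2 h
    simp (config := { decide := true }) only [φ₁, φ₂, φ₃, φ₄, LinearMap.sub_apply,
      LinearMap.add_apply, pr_apply, Pi.add_apply, Pi.smul_apply, smul_eq_mul, v,
      if_true, if_false, mul_one, mul_zero, add_apply', smul_apply'] at e1 e2 e3 e4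
    refine ⟨by linarith, by linarith, by linarith, by linarith⟩
  · rintro ⟨h1, h2, h3, h4⟩
    have ha1 : a 1 = a 0 := h1.symm
    have ha2 : a 2 = a 0 := (h1.trans h2).symm
    have ha4 : a 4 = a 3 := h3.symm
    have ha5 : a 5 = a 3 := (h3.trans h4).symm
    rw [ha1, ha2, ha4, ha5]
    have hX : ∀ i, d 6 i ∈ Submodule.span ℝ (Set.range (d 6) ∪ {v 6 {0, 1, 2}}) :=
      fun i => Submodule.subset_span (Or.inl ⟨i, rfl⟩)
    have hV : v 6 {0,1,2} ∈ Submodule.span ℝ (Set.range (d 6) ∪ {v 6 {0, 1, 2}}) :=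
      Submodule.subset_span (Or.inr rfl)
    have eq : a 0 • v 6 {0, 1} + a 0 • v 6 {0, 2} + a 0 • v 6 {1, 2}
        + a 3 • v 6 {3, 4} + a 3 • v 6 {3, 5} + a 3 • v 6 {4, 5}
        = a 0 • (d 6 0 + d 6 1 + d 6 2 + v 6 {0,1,2})
          + a 3 • (d 6 3 + d 6 4 + d 6 5 + v 6 {0,1,2}) := by
      rw [← sum012, ← sum345]; module
    rw [eq]
    exact Submodule.add_mem _
      (Submodule.smul_mem _ _ (add_mem (add_mem (add_mem (hX 0) (hX 1)) (hX 2)) hV))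
      (Submodule.smul_mem _ _ (add_mem (add_mem (add_mem (hX 3) (hX 4)) (hX 5)) hV))
end

section
/- Let T be a finite tree in which every vertex has degree 1 or 3, with exactly n ≥ 4 leaves. Define an NNI move as follows: contract an internal edge (an edge joining two degree-3 vertices) to obtain a degree-4 vertex, then split that degree-4 vertex into two degree-3 vertices joined by a new edge, in one of the other two possible ways of partitioning the four incident branches into two pairs. Then the graph whose vertices are (isomorphism classes of) trivalent trees with leaves labeled bijectively by {1,…,n}, and whose edges connect trees related by a single NNI move, is connected. -/
/-- Two subsets A, B of the leaf set are compatible splits if one of the four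
corners A∩B, A\B, B\A, (A∪B)ᶜ is empty, i.e. the bipartitions {A,Aᶜ}, {B,Bᶜ}
can be realized by two edges of a common tree. -/
def Compatible {n : ℕ} (A B : Finset (Fin n)) : Prop :=
  A ⊆ B ∨ B ⊆ A ∨ A ∩ B = ∅ ∨ A ∪ B = Finset.univ

/-- A trivalent tree with n labeled leaves, encoded (up to isomorphism) by its
set of nontrivial splits: a pairwise compatible, complement-closed family of
subsets A with 2 ≤ |A| ≤ n-2, consisting of exactly n-3 complementary pairs
(i.e. 2(n-3) sets).  Such maximal compatible split systems correspond exactly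
to isomorphism classes of trees with n labeled leaves all of whose internal
vertices have degree 3. -/
structure TrivalentTree (n : ℕ) where
  splits : Finset (Finset (Fin n))
  card_le : ∀ A ∈ splits, 2 ≤ A.card ∧ A.card ≤ n - 2
  compat : ∀ A ∈ splits, ∀ B ∈ splits, Compatible A B
  compl_mem : ∀ A ∈ splits, Finset.univ \ A ∈ splits
  card_eq : splits.card = 2 * (n - 3)

/-- The NNI graph: two trivalent trees are adjacent iff they differ in exactly
one complementary pair of splits, i.e. exactly when one is obtained from the
other by contracting one internal edge and re-expanding the resulting 4-valent
vertex in one of the two other ways. -/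
def NNIGraph (n : ℕ) : SimpleGraph (TrivalentTree n) where
  Adj T T' := (T.splits \ T'.splits).card = 2 ∧ (T'.splits \ T.splits).card = 2
  symm := ⟨fun _ _ h => ⟨h.2, h.1⟩⟩
  loopless := ⟨fun T h => by simp [Finset.sdiff_self] at h⟩



namespace NNIP

variable {α : Type*} [DecidableEq α]

/-- Compatibility relative to a ground set `U`. -/
def CompatOn (U A B : Finset α) : Prop :=
  A ⊆ B ∨ B ⊆ A ∨ A ∩ B = ∅ ∨ U ⊆ A ∪ B

lemma inter_empty_iff (A B : Finset α) : A ∩ B = ∅ ↔ ∀ x, x ∈ A → x ∉ B := by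
  simp only [Finset.eq_empty_iff_forall_notMem, Finset.mem_inter, not_and]

lemma sdiff_sdiff_self {U B : Finset α} (h : B ⊆ U) : U \ (U \ B) = B := by
  rw [Finset.sdiff_sdiff_self_left, Finset.inter_eq_right.mpr h]

lemma split_bound : ∀ (m : ℕ) (U : Finset α) (F : Finset (Finset α)), U.card ≤ m →
    (∀ A ∈ F, A ⊆ U ∧ 2 ≤ A.card ∧ A.card + 2 ≤ U.card) →
    (∀ A ∈ F, ∀ B ∈ F, CompatOn U A B) →
    (∀ A ∈ F, U \ A ∈ F) →
    F = ∅ ∨ F.card + 6 ≤ 2 * U.card := by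
  intro m
  induction m with
  | zero =>
    intro U F hU hmem _ _
    rcases F.eq_empty_or_nonempty with h | ⟨A0, hA0⟩
    · exact Or.inl h
    · have := (hmem A0 hA0).2.2; omega
  | succ m ih =>
    intro U F hUm hmem hcompat hcompl
    rcases F.eq_empty_or_nonempty with h | hne
    · exact Or.inl h
    right
    obtain ⟨A, hA, hAmin⟩ := F.exists_min_image Finset.card hne
    have hAU := (hmem A hA).1
    have hA2 := (hmem A hA).2.1
    have hAU2 := (hmem A hA).2.2
    -- dichotomy
    have hdich : ∀ B ∈ F, A ⊆ B ∨ A ∩ B = ∅ := by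
      intro B hB
      rcases hcompat A hA B hB with h | h | h | h
      · exact Or.inl h
      · left
        have := hAmin B hB
        have : B = A := Finset.eq_of_subset_of_card_le h this
        simp [this]
      · exact Or.inr h
      · -- U ⊆ A ∪ B : then U \ B ⊆ A, minimality forces U \ B = A
        have hsub : U \ B ⊆ A := by
          intro y hy
          rw [Finset.mem_sdiff] at hy
          rcases Finset.mem_union.mp (h hy.1) with h' | h'
          · exact h'
          · exact absurd h' hy.2
        have hUB : U \ B ∈ F := hcompl B hB
        have : U \ B = A := Finset.eq_of_subset_of_card_le hsub (hAmin _ hUB)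
        right
        rw [inter_empty_iff]
        intro y hyA hyB
        have : y ∈ U \ B := this ▸ hyA
        exact (Finset.mem_sdiff.mp this).2 hyB
    obtain ⟨a, ha⟩ : A.Nonempty := Finset.card_pos.mp (by omega)
    have haU : a ∈ U := hAU ha
    have hanUA : a ∉ U \ A := by simp [ha]
    set U' : Finset α := insert a (U \ A) with hU'
    have hU'card : U'.card + A.card = U.card + 1 := by
      rw [hU', Finset.card_insert_of_notMem hanUA, Finset.card_sdiff_of_subset hAU]
      omega
    have hUAF : U \ A ∈ F := hcompl A hA
    have hAneUA : A ≠ U \ A := fun h => hanUA (h ▸ ha)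
    set f : Finset α → Finset α := fun B => if A ⊆ B then insert a (B \ A) else B with hf
    set E : Finset (Finset α) := (F.erase A).erase (U \ A) with hE
    have hEmem : ∀ B, B ∈ E ↔ (B ∈ F ∧ B ≠ A ∧ B ≠ U \ A) := by
      intro B
      simp [hE, Finset.mem_erase]
      tauto
    have hF2 : 2 ≤ F.card := by
      have h2 : ({A, U \ A} : Finset (Finset α)) ⊆ F := by
        intro y hy; rcases Finset.mem_insert.mp hy with h|h
        · exact h ▸ hA
        · exact (Finset.mem_singleton.mp h) ▸ hUAF
      calc 2 = ({A, U \ A} : Finset (Finset α)).card := by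
            rw [Finset.card_insert_of_notMem (by simpa using hAneUA)]; simp
        _ ≤ F.card := Finset.card_le_card h2
    have hEcard : E.card + 2 = F.card := by
      have h1 : (F.erase A).card = F.card - 1 := Finset.card_erase_of_mem hA
      have h2 : E.card = (F.erase A).card - 1 :=
        Finset.card_erase_of_mem (Finset.mem_erase.mpr ⟨Ne.symm hAneUA, hUAF⟩)
      have h3 : 0 < (F.erase A).card :=
        Finset.card_pos.mpr ⟨U \ A, Finset.mem_erase.mpr ⟨Ne.symm hAneUA, hUAF⟩⟩
      omega
    -- basic facts about members of E
    have hEdich : ∀ B ∈ E, (A ⊆ B ∧ f B = insert a (B \ A)) ∨ (A ∩ B = ∅ ∧ f B = B) := by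
      intro B hB
      rw [hEmem] at hB
      rcases hdich B hB.1 with h | h
      · left; exact ⟨h, by simp [hf, h]⟩
      · right
        refine ⟨h, ?_⟩
        have : ¬ A ⊆ B := by
          intro hsub
          rw [inter_empty_iff] at h
          exact h a ha (hsub ha)
        simp [hf, this]
    set F' : Finset (Finset α) := E.image f with hF'
    have hinj : Set.InjOn f E := by
      intro B₁ h₁ B₂ h₂ heq
      rcases hEdich B₁ h₁ with ⟨hs₁, he₁⟩ | ⟨hd₁, he₁⟩ <;>
        rcases hEdich B₂ h₂ with ⟨hs₂, he₂⟩ | ⟨hd₂, he₂⟩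
      · rw [he₁, he₂] at heq
        have : B₁ \ A = B₂ \ A := by
          ext y
          constructor <;> intro hy
          · have hy' : y ∈ insert a (B₂ \ A) := heq ▸ (Finset.mem_insert_of_mem hy)
            rcases Finset.mem_insert.mp hy' with h | h
            · exact absurd (h ▸ hy) (by simp [ha])
            · exact h
          · have hy' : y ∈ insert a (B₁ \ A) := heq ▸ (Finset.mem_insert_of_mem hy)
            rcases Finset.mem_insert.mp hy' with h | h
            · exact absurd (h ▸ hy) (by simp [ha])
            · exact h
        calc B₁ = B₁ \ A ∪ A := by rw [Finset.sdiff_union_of_subset hs₁]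
          _ = B₂ \ A ∪ A := by rw [this]
          _ = B₂ := Finset.sdiff_union_of_subset hs₂
      · exfalso
        rw [he₁, he₂] at heq
        rw [inter_empty_iff] at hd₂
        exact hd₂ a ha (heq ▸ Finset.mem_insert_self a _)
      · exfalso
        rw [he₁, he₂] at heq
        rw [inter_empty_iff] at hd₁
        exact hd₁ a ha (heq ▸ Finset.mem_insert_self a _)
      · rw [he₁, he₂] at heq; exact heq
    have hF'card : F'.card = E.card := Finset.card_image_of_injOn hinj
    -- properties of images
    have himg : ∀ B ∈ E, f B ⊆ U' ∧ 2 ≤ (f B).card ∧ (f B).card + 2 ≤ U'.card := by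
      intro B hB
      have hBF := (hEmem B).mp hB
      have hBU := (hmem B hBF.1).1
      have hB2 := (hmem B hBF.1).2.1
      have hBU2 := (hmem B hBF.1).2.2
      rcases hEdich B hB with ⟨hs, he⟩ | ⟨hd, he⟩
      · rw [he]
        have hsub : insert a (B \ A) ⊆ U' := by
          intro y hy
          rcases Finset.mem_insert.mp hy with h | h
          · exact h ▸ Finset.mem_insert_self a _
          · exact Finset.mem_insert_of_mem (Finset.sdiff_subset_sdiff hBU (le_refl _) h)
        have hcard : (insert a (B \ A)).card = B.card - A.card + 1 := by
          rw [Finset.card_insert_of_notMem (by simp [ha]), Finset.card_sdiff_of_subset hs]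
        have hlt : A.card < B.card := by
          have : A ⊂ B := Finset.ssubset_iff_subset_ne.mpr ⟨hs, Ne.symm hBF.2.1⟩
          exact Finset.card_lt_card this
        exact ⟨hsub, by omega, by omega⟩
      · rw [he]
        have hsubUA : B ⊆ U \ A := by
          intro y hy
          rw [Finset.mem_sdiff]
          rw [inter_empty_iff] at hd
          exact ⟨hBU hy, fun h => hd y h hy⟩
        have hssub : B ⊂ U \ A := Finset.ssubset_iff_subset_ne.mpr ⟨hsubUA, hBF.2.2⟩
        have hlt := Finset.card_lt_card hssub
        have : (U \ A).card + A.card = U.card := by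
          rw [Finset.card_sdiff_of_subset hAU]; omega
        exact ⟨hsubUA.trans (Finset.subset_insert a _), by omega, by omega⟩
    -- complement closure for F'
    have hcomplE : ∀ B ∈ E, U \ B ∈ E ∧ U' \ f B = f (U \ B) := by
      intro B hB
      have hBF := (hEmem B).mp hB
      have hBU := (hmem B hBF.1).1
      have hUBmem : U \ B ∈ F := hcompl B hBF.1
      have hUBne1 : U \ B ≠ A := by
        intro h
        apply hBF.2.2
        rw [← sdiff_sdiff_self hBU, h]
      have hUBne2 : U \ B ≠ U \ A := by
        intro h
        apply hBF.2.1
        rw [← sdiff_sdiff_self hBU, h, sdiff_sdiff_self hAU]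
      have hUBE : U \ B ∈ E := (hEmem _).mpr ⟨hUBmem, hUBne1, hUBne2⟩
      refine ⟨hUBE, ?_⟩
      rcases hEdich B hB with ⟨hs, he⟩ | ⟨hd, he⟩
      · -- A ⊆ B : U \ B disjoint from A, f (U\B) = U\B
        have hd' : A ∩ (U \ B) = ∅ := by
          rw [inter_empty_iff]
          intro y hy hy'
          exact (Finset.mem_sdiff.mp hy').2 (hs hy)
        rcases hEdich _ hUBE with ⟨hs'', _⟩ | ⟨_, he'⟩
        · exfalso
          rw [inter_empty_iff] at hd'
          exact hd' a ha (hs'' ha)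
        · rw [he, he']
          ext y
          have hsy : y ∈ A → y ∈ B := fun h => hs h
          by_cases hya : y = a
          · subst hya
            simp [Finset.mem_sdiff, ha, hs ha]
          · simp only [hU', Finset.mem_sdiff, Finset.mem_insert, hya, false_or]
            tauto
      · -- A ∩ B = ∅ : A ⊆ U \ B
        have hs' : A ⊆ U \ B := by
          intro y hy
          rw [inter_empty_iff] at hd
          exact Finset.mem_sdiff.mpr ⟨hAU hy, hd y hy⟩
        rcases hEdich _ hUBE with ⟨_, he'⟩ | ⟨hd', _⟩
        · rw [he, he']
          ext y
          have hdy : y ∈ A → y ∉ B := by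
            rw [inter_empty_iff] at hd; exact hd y
          have hay : a ∈ A := ha
          by_cases hya : y = a
          · subst hya
            simp [hU', Finset.mem_sdiff, ha, haU, hdy ha]
          · simp only [hU', Finset.mem_sdiff, Finset.mem_insert, hya, false_or]
            tauto
        · exfalso
          rw [inter_empty_iff] at hd'
          exact hd' a ha (hs' ha)
    -- compatibility for F'
    have hcompatE : ∀ B₁ ∈ E, ∀ B₂ ∈ E, CompatOn U' (f B₁) (f B₂) := by
      intro B₁ h₁ B₂ h₂
      have hc := hcompat B₁ ((hEmem B₁).mp h₁).1 B₂ ((hEmem B₂).mp h₂).1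
      rcases hEdich B₁ h₁ with ⟨hs₁, he₁⟩ | ⟨hd₁, he₁⟩ <;>
        rcases hEdich B₂ h₂ with ⟨hs₂, he₂⟩ | ⟨hd₂, he₂⟩ <;> rw [he₁, he₂]
      · -- both contain A
        rcases hc with h | h | h | h
        · left
          intro y hy
          rcases Finset.mem_insert.mp hy with h' | h'
          · exact Finset.mem_insert.mpr (Or.inl h')
          · rw [Finset.mem_sdiff] at h'
            exact Finset.mem_insert_of_mem (Finset.mem_sdiff.mpr ⟨h h'.1, h'.2⟩)
        · right; left
          intro y hy
          rcases Finset.mem_insert.mp hy with h' | h'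
          · exact Finset.mem_insert.mpr (Or.inl h')
          · rw [Finset.mem_sdiff] at h'
            exact Finset.mem_insert_of_mem (Finset.mem_sdiff.mpr ⟨h h'.1, h'.2⟩)
        · exfalso
          rw [inter_empty_iff] at h
          exact h a (hs₁ ha) (hs₂ ha)
        · right; right; right
          intro y hy
          rcases Finset.mem_insert.mp hy with h' | h'
          · exact Finset.mem_union_left _ (Finset.mem_insert.mpr (Or.inl h'))
          · rw [Finset.mem_sdiff] at h'
            rcases Finset.mem_union.mp (h h'.1) with h'' | h''
            · exact Finset.mem_union_left _ (Finset.mem_insert_of_mem (Finset.mem_sdiff.mpr ⟨h'', h'.2⟩))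
            · exact Finset.mem_union_right _ (Finset.mem_insert_of_mem (Finset.mem_sdiff.mpr ⟨h'', h'.2⟩))
      · -- A ⊆ B₁, A ∩ B₂ = ∅
        rw [inter_empty_iff] at hd₂
        rcases hc with h | h | h | h
        · exfalso; exact hd₂ a ha (h (hs₁ ha))
        · right; left
          intro y hy
          exact Finset.mem_insert_of_mem (Finset.mem_sdiff.mpr ⟨h hy, fun h' => hd₂ y h' hy⟩)
        · right; right; left
          rw [inter_empty_iff]
          intro y hy hy'
          rcases Finset.mem_insert.mp hy with h' | h'
          · exact hd₂ a ha (h' ▸ hy')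
          · rw [inter_empty_iff] at h
            exact h y (Finset.mem_sdiff.mp h').1 hy'
        · right; right; right
          intro y hy
          rcases Finset.mem_insert.mp hy with h' | h'
          · exact Finset.mem_union_left _ (Finset.mem_insert.mpr (Or.inl h'))
          · rw [Finset.mem_sdiff] at h'
            rcases Finset.mem_union.mp (h h'.1) with h'' | h''
            · exact Finset.mem_union_left _ (Finset.mem_insert_of_mem (Finset.mem_sdiff.mpr ⟨h'', h'.2⟩))
            · exact Finset.mem_union_right _ h''
      · -- A ∩ B₁ = ∅, A ⊆ B₂ (symmetric)
        rw [inter_empty_iff] at hd₁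
        rcases hc with h | h | h | h
        · left
          intro y hy
          exact Finset.mem_insert_of_mem (Finset.mem_sdiff.mpr ⟨h hy, fun h' => hd₁ y h' hy⟩)
        · exfalso; exact hd₁ a ha (h (hs₂ ha))
        · right; right; left
          rw [inter_empty_iff]
          intro y hy hy'
          rcases Finset.mem_insert.mp hy' with h' | h'
          · exact hd₁ a ha (h' ▸ hy)
          · rw [inter_empty_iff] at h
            exact h y hy (Finset.mem_sdiff.mp h').1
        · right; right; right
          intro y hy
          rcases Finset.mem_insert.mp hy with h' | h'
          · exact Finset.mem_union_right _ (Finset.mem_insert.mpr (Or.inl h'))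
          · rw [Finset.mem_sdiff] at h'
            rcases Finset.mem_union.mp (h h'.1) with h'' | h''
            · exact Finset.mem_union_left _ h''
            · exact Finset.mem_union_right _ (Finset.mem_insert_of_mem (Finset.mem_sdiff.mpr ⟨h'', h'.2⟩))
      · -- both disjoint from A
        rcases hc with h | h | h | h
        · exact Or.inl h
        · exact Or.inr (Or.inl h)
        · exact Or.inr (Or.inr (Or.inl h))
        · exfalso
          rw [inter_empty_iff] at hd₁ hd₂
          rcases Finset.mem_union.mp (h haU) with h' | h'
          · exact hd₁ a ha h'
          · exact hd₂ a ha h'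
    -- apply IH
    have hres := ih U' F' (by omega)
      (by
        intro B' hB'
        obtain ⟨B, hB, rfl⟩ := Finset.mem_image.mp hB'
        exact himg B hB)
      (by
        intro A' hA' B' hB'
        obtain ⟨B₁, h₁, rfl⟩ := Finset.mem_image.mp hA'
        obtain ⟨B₂, h₂, rfl⟩ := Finset.mem_image.mp hB'
        exact hcompatE B₁ h₁ B₂ h₂)
      (by
        intro B' hB'
        obtain ⟨B, hB, rfl⟩ := Finset.mem_image.mp hB'
        obtain ⟨hUBE, heq⟩ := hcomplE B hB
        rw [heq]
        exact Finset.mem_image_of_mem f hUBE)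
    rcases hres with h | h
    · -- F' empty: E empty, F.card = 2
      have : E = ∅ := by
        by_contra hne'
        obtain ⟨B, hB⟩ := Finset.nonempty_iff_ne_empty.mpr hne'
        exact absurd h (Finset.nonempty_iff_ne_empty.mp ⟨f B, Finset.mem_image_of_mem f hB⟩)
      have hE0 : E.card = 0 := by rw [this]; simp
      omega
    · omega

end NNIP

namespace NNIP

open Finset

variable {n : ℕ}

lemma mem_compl' {A : Finset (Fin n)} {y : Fin n} : y ∈ univ \ A ↔ y ∉ A := by simp

lemma compl_compl' (A : Finset (Fin n)) : univ \ (univ \ A) = A :=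
  sdiff_sdiff_self (subset_univ A)

lemma union_univ_iff {A B : Finset (Fin n)} : A ∪ B = univ ↔ ∀ y, y ∉ A → y ∈ B := by
  constructor
  · intro h y hy
    rcases mem_union.mp (h ▸ mem_univ y) with h' | h'
    · exact absurd h' hy
    · exact h'
  · intro h
    apply eq_univ_of_forall
    intro y
    by_cases hy : y ∈ A
    · exact mem_union_left _ hy
    · exact mem_union_right _ (h y hy)

lemma compat_symm {A B : Finset (Fin n)} (h : Compatible A B) : Compatible B A := by
  rcases h with h | h | h | h
  · exact Or.inr (Or.inl h)
  · exact Or.inl h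
  · exact Or.inr (Or.inr (Or.inl (by rwa [inter_comm])))
  · exact Or.inr (Or.inr (Or.inr (by rwa [union_comm])))

lemma compat_compl {A B : Finset (Fin n)} (h : Compatible A B) :
    Compatible (univ \ A) B := by
  rcases h with h | h | h | h
  · right; right; right
    rw [union_univ_iff]
    intro y hy
    rw [mem_compl'] at hy
    exact h (not_not.mp hy)
  · right; right; left
    rw [inter_empty_iff]
    intro y hy
    rw [mem_compl'] at hy
    exact fun h' => hy (h h')
  · right; left
    intro y hy
    rw [mem_compl']
    rw [inter_empty_iff] at h
    exact fun h' => h y h' hy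
  · left
    intro y hy
    rw [mem_compl'] at hy
    rw [union_univ_iff] at h
    exact h y hy

lemma compat_self (A : Finset (Fin n)) : Compatible A A := Or.inl (le_refl A)

lemma compat_compl_self (A : Finset (Fin n)) : Compatible A (univ \ A) := by
  right; right; right
  rw [union_univ_iff]
  intro y hy
  exact mem_compl'.mpr hy

-- basic facts about splits
lemma split_ne_univ (hn : 4 ≤ n) (T : TrivalentTree n) {A : Finset (Fin n)}
    (hA : A ∈ T.splits) : A ≠ univ := by
  intro h
  have h1 := (T.card_le A hA).2
  rw [h] at h1
  rw [Finset.card_univ, Fintype.card_fin] at h1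
  omega

lemma split_nonempty (T : TrivalentTree n) {A : Finset (Fin n)}
    (hA : A ∈ T.splits) : A.Nonempty :=
  Finset.card_pos.mp (by have := (T.card_le A hA).1; omega)

lemma compl_card (A : Finset (Fin n)) : (univ \ A).card + A.card = n := by
  rw [Finset.card_sdiff_of_subset (subset_univ A), Finset.card_univ, Fintype.card_fin]
  have : A.card ≤ n := by
    calc A.card ≤ (univ : Finset (Fin n)).card := Finset.card_le_card (subset_univ A)
      _ = n := by rw [Finset.card_univ, Fintype.card_fin]
  omega

lemma ne_univ_compl_nonempty {A : Finset (Fin n)} (h : A ≠ univ) : (univ \ A).Nonempty := by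
  rcases (univ \ A).eq_empty_or_nonempty with h' | h'
  · exfalso
    apply h
    apply Finset.eq_univ_of_forall
    intro y
    by_contra hy
    exact absurd (mem_compl'.mpr hy) (h' ▸ Finset.notMem_empty y)
  · exact h'

/-- The interval `{0, …, k-1}` (intersected with range) as a subset of `Fin n`. -/
def Iv (n k : ℕ) : Finset (Fin n) :=
  Finset.attachFin (Finset.range (min k n))
    (fun m hm => lt_of_lt_of_le (Finset.mem_range.mp hm) (min_le_right k n))

lemma mem_Iv {k : ℕ} {v : Fin n} : v ∈ Iv n k ↔ v.val < min k n := by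
  rw [Iv, Finset.mem_attachFin, Finset.mem_range]

lemma mem_Iv' {k : ℕ} (hk : k ≤ n) {v : Fin n} : v ∈ Iv n k ↔ v.val < k := by
  rw [mem_Iv, min_eq_left hk]

lemma card_Iv {k : ℕ} : (Iv n k).card = min k n := by
  rw [Iv, Finset.card_attachFin, Finset.card_range]

lemma Iv_mono {k l : ℕ} (h : k ≤ l) : Iv n k ⊆ Iv n l := by
  intro v hv
  rw [mem_Iv] at *
  omega

/-- Caterpillar splits. -/
def catSplits (n : ℕ) : Finset (Finset (Fin n)) :=
  (Finset.Icc 2 (n-2)).image (Iv n) ∪ (Finset.Icc 2 (n-2)).image (fun k => univ \ Iv n k)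

lemma Iv_inj_on (hn : 4 ≤ n) : ∀ k ∈ Finset.Icc 2 (n-2), ∀ l ∈ Finset.Icc 2 (n-2),
    Iv n k = Iv n l → k = l := by
  intro k hk l hl h
  rw [Finset.mem_Icc] at hk hl
  have hc : (Iv n k).card = (Iv n l).card := by rw [h]
  rw [card_Iv, card_Iv] at hc
  omega

lemma zero_mem_Iv (hn : 4 ≤ n) {k : ℕ} (hk : 1 ≤ k) : (⟨0, by omega⟩ : Fin n) ∈ Iv n k := by
  rw [mem_Iv]
  show (0:ℕ) < min k n
  omega

lemma catSplits_card (hn : 4 ≤ n) : (catSplits n).card = 2 * (n - 3) := by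
  have h1 : ((Finset.Icc 2 (n-2)).image (Iv n)).card = n - 3 := by
    rw [Finset.card_image_of_injOn (fun k hk l hl h => Iv_inj_on hn k hk l hl h)]
    rw [Nat.card_Icc]
    omega
  have h2 : ((Finset.Icc 2 (n-2)).image (fun k => univ \ Iv n k)).card = n - 3 := by
    rw [Finset.card_image_of_injOn]
    · rw [Nat.card_Icc]; omega
    · intro k hk l hl h
      have h' : univ \ Iv n k = univ \ Iv n l := h
      apply Iv_inj_on hn k hk l hl
      rw [← compl_compl' (Iv n k), h', compl_compl']
  have hd : Disjoint ((Finset.Icc 2 (n-2)).image (Iv n))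
      ((Finset.Icc 2 (n-2)).image (fun k => univ \ Iv n k)) := by
    rw [Finset.disjoint_left]
    intro A hA hA'
    obtain ⟨k, hk, rfl⟩ := Finset.mem_image.mp hA
    obtain ⟨l, hl, hEq⟩ := Finset.mem_image.mp hA'
    rw [Finset.mem_Icc] at hk hl
    have h0 : (⟨0, by omega⟩ : Fin n) ∈ Iv n k := zero_mem_Iv hn (by omega)
    have h0' : (⟨0, by omega⟩ : Fin n) ∉ univ \ Iv n l :=
      fun h => (mem_compl'.mp h) (zero_mem_Iv hn (by omega))
    exact h0' (hEq ▸ h0)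
  rw [catSplits, Finset.card_union_of_disjoint hd, h1, h2]
  omega

lemma mem_catSplits {A : Finset (Fin n)} :
    A ∈ catSplits n ↔ ∃ k, 2 ≤ k ∧ k ≤ n - 2 ∧ (A = Iv n k ∨ A = univ \ Iv n k) := by
  rw [catSplits, Finset.mem_union, Finset.mem_image, Finset.mem_image]
  constructor
  · rintro (⟨k, hk, rfl⟩ | ⟨k, hk, rfl⟩) <;> rw [Finset.mem_Icc] at hk
    · exact ⟨k, hk.1, hk.2, Or.inl rfl⟩
    · exact ⟨k, hk.1, hk.2, Or.inr rfl⟩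
  · rintro ⟨k, h1, h2, (rfl | rfl)⟩
    · exact Or.inl ⟨k, Finset.mem_Icc.mpr ⟨h1, h2⟩, rfl⟩
    · exact Or.inr ⟨k, Finset.mem_Icc.mpr ⟨h1, h2⟩, rfl⟩

lemma compat_Iv {k l : ℕ} : Compatible (Iv n k) (Iv n l) := by
  rcases le_total k l with h | h
  · exact Or.inl (Iv_mono h)
  · exact Or.inr (Or.inl (Iv_mono h))

/-- The caterpillar tree. -/
def cat (hn : 4 ≤ n) : TrivalentTree n where
  splits := catSplits n
  card_le := by
    intro A hA
    obtain ⟨k, h1, h2, (rfl | rfl)⟩ := mem_catSplits.mp hA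
    · rw [card_Iv]; omega
    · have := compl_card (Iv n k)
      rw [card_Iv] at *
      omega
  compat := by
    intro A hA B hB
    obtain ⟨k, hk1, hk2, (rfl | rfl)⟩ := mem_catSplits.mp hA <;>
      obtain ⟨l, hl1, hl2, (rfl | rfl)⟩ := mem_catSplits.mp hB
    · exact compat_Iv
    · exact compat_symm (compat_compl (compat_symm compat_Iv))
    · exact compat_compl compat_Iv
    · exact compat_compl (compat_symm (compat_compl (compat_symm compat_Iv)))
  compl_mem := by
    intro A hA
    obtain ⟨k, h1, h2, (rfl | rfl)⟩ := mem_catSplits.mp hA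
    · exact mem_catSplits.mpr ⟨k, h1, h2, Or.inr rfl⟩
    · rw [compl_compl']
      exact mem_catSplits.mpr ⟨k, h1, h2, Or.inl rfl⟩
  card_eq := catSplits_card hn

end NNIP
namespace NNIP

open Finset

variable {n : ℕ}

lemma compat_compatOn {A B : Finset (Fin n)} (h : Compatible A B) :
    CompatOn univ A B := by
  rcases h with h | h | h | h
  · exact Or.inl h
  · exact Or.inr (Or.inl h)
  · exact Or.inr (Or.inr (Or.inl h))
  · exact Or.inr (Or.inr (Or.inr (h ▸ Finset.Subset.refl _)))

lemma univ_card : (univ : Finset (Fin n)).card = n := by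
  rw [Finset.card_univ, Fintype.card_fin]

/-- Any tree's split system is maximal: any split compatible with all of it,
with the right cardinalities, already belongs to it. -/
lemma maximal_splits (hn : 4 ≤ n) (T : TrivalentTree n) (I : Finset (Fin n))
    (hI2 : 2 ≤ I.card) (hIn : I.card ≤ n - 2)
    (hIcomp : ∀ D ∈ T.splits, Compatible I D) : I ∈ T.splits := by
  by_contra hIj
  have hIc : univ \ I ∉ T.splits := by
    intro h
    have := T.compl_mem _ h
    rw [compl_compl'] at this
    exact hIj this
  have hIne : I ≠ univ \ I := by
    intro h
    obtain ⟨y, hy⟩ := Finset.card_pos.mp (show 0 < I.card by omega)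
    exact (mem_compl'.mp (h ▸ hy)) hy
  set F : Finset (Finset (Fin n)) := insert I (insert (univ \ I) T.splits) with hF
  have hFcard : F.card = T.splits.card + 2 := by
    rw [hF, Finset.card_insert_of_notMem, Finset.card_insert_of_notMem hIc]
    rw [Finset.mem_insert]
    push_neg
    exact ⟨hIne, hIj⟩
  have hmemF : ∀ A, A ∈ F ↔ (A = I ∨ A = univ \ I ∨ A ∈ T.splits) := by
    intro A
    rw [hF, Finset.mem_insert, Finset.mem_insert]
  have hcompF : ∀ A ∈ F, Compatible I A := by
    intro A hA
    rcases (hmemF A).mp hA with rfl | rfl | h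
    · exact compat_self _
    · exact compat_compl_self I
    · exact hIcomp A h
  have := split_bound (α := Fin n) n univ F (by rw [univ_card])
    (by
      intro A hA
      rcases (hmemF A).mp hA with rfl | rfl | h
      · exact ⟨subset_univ _, hI2, by rw [univ_card]; omega⟩
      · have := compl_card I
        exact ⟨subset_univ _, by omega, by rw [univ_card]; omega⟩
      · have := T.card_le A h
        exact ⟨subset_univ _, this.1, by rw [univ_card]; omega⟩)
    (by
      intro A hA B hB
      rcases (hmemF A).mp hA with rfl | rfl | hA'
      · exact compat_compatOn (hcompF B hB)
      · exact compat_compatOn (compat_compl (hcompF B hB))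
      · rcases (hmemF B).mp hB with rfl | rfl | hB'
        · exact compat_compatOn (compat_symm (hIcomp A hA'))
        · exact compat_compatOn (compat_symm (compat_compl (hIcomp A hA')))
        · exact compat_compatOn (T.compat A hA' B hB'))
    (by
      intro A hA
      rcases (hmemF A).mp hA with rfl | rfl | h
      · exact (hmemF _).mpr (Or.inr (Or.inl rfl))
      · rw [compl_compl']
        exact (hmemF _).mpr (Or.inl rfl)
      · exact (hmemF _).mpr (Or.inr (Or.inr (T.compl_mem A h))))
  rcases this with h | h
  · have : I ∈ F := (hmemF I).mpr (Or.inl rfl)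
    rw [h] at this
    exact Finset.notMem_empty _ this
  · rw [hFcard, T.card_eq, univ_card] at h
    omega

lemma exists_B (hn : 4 ≤ n) (T : TrivalentTree n) (P : Finset (Fin n)) (x : Fin n)
    (hPne : P.Nonempty) (hxP : x ∉ P)
    (hI2 : 2 ≤ (insert x P).card) (hIn : (insert x P).card ≤ n - 2)
    (hPcomp : ∀ D ∈ T.splits, Compatible P D)
    (hIj : insert x P ∉ T.splits) :
    ∃ B ∈ T.splits, B ∩ P = ∅ ∧ x ∈ B ∧ B ∪ P ≠ univ ∧
      (∀ A ∈ T.splits, A ∩ P = ∅ → x ∈ A → A ∪ P ≠ univ → A ⊆ B) := by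
  set C := T.splits.filter (fun A => A ∩ P = ∅ ∧ x ∈ A ∧ A ∪ P ≠ univ) with hC
  rcases C.eq_empty_or_nonempty with hCe | hCne
  · -- chain empty: insert x P would be a new compatible split, contradiction
    exfalso
    have hno : ∀ A ∈ T.splits, A ∩ P = ∅ → x ∈ A → A ∪ P = univ := by
      intro A hA h1 h2
      by_contra h3
      have : A ∈ C := by
        rw [hC, mem_filter]
        exact ⟨hA, h1, h2, h3⟩
      rw [hCe] at this
      exact Finset.notMem_empty _ this
    apply hIj
    apply maximal_splits hn T _ hI2 hIn
    intro D hD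
    rcases hPcomp D hD with hPD | hDP | hint | huni
    · by_cases hxD : x ∈ D
      · exact Or.inl (Finset.insert_subset hxD hPD)
      · have hE : univ \ D ∈ T.splits := T.compl_mem D hD
        have hxE : x ∈ univ \ D := mem_compl'.mpr hxD
        have hEP : (univ \ D) ∩ P = ∅ := by
          rw [inter_empty_iff]
          intro y hy hyP
          exact (mem_compl'.mp hy) (hPD hyP)
        have huniv := hno _ hE hEP hxE
        have hDP : D ⊆ P := by
          intro y hy
          rw [union_univ_iff] at huniv
          by_contra hyP
          have : y ∉ univ \ D := fun h => (mem_compl'.mp h) hy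
          exact hyP (huniv y this)
        have hDeq : D = P := Finset.Subset.antisymm hDP hPD
        rw [hDeq]
        exact Or.inr (Or.inl (Finset.subset_insert x P))
    · exact Or.inr (Or.inl (hDP.trans (Finset.subset_insert x P)))
    · by_cases hxD : x ∈ D
      · have hDP' : D ∩ P = ∅ := by rw [inter_comm]; exact hint
        have huniv := hno D hD hDP' hxD
        right; right; right
        rw [union_univ_iff] at huniv ⊢
        intro y hy
        by_contra hyD
        exact hy (Finset.mem_insert_of_mem (huniv y hyD))
      · right; right; left
        rw [inter_empty_iff]
        intro y hy hyD
        rcases Finset.mem_insert.mp hy with rfl | hyP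
        · exact hxD hyD
        · rw [inter_empty_iff] at hint
          exact hint y hyP hyD
    · right; right; right
      rw [union_univ_iff] at *
      intro y hy
      apply huni
      intro hyP
      exact hy (Finset.mem_insert_of_mem hyP)
  · obtain ⟨B, hB, hBmax⟩ := C.exists_max_image Finset.card hCne
    have hB' := hB
    rw [hC, mem_filter] at hB'
    refine ⟨B, hB'.1, hB'.2.1, hB'.2.2.1, hB'.2.2.2, ?_⟩
    intro A hA h1 h2 h3
    have hAC : A ∈ C := by rw [hC, mem_filter]; exact ⟨hA, h1, h2, h3⟩
    rcases T.compat A hA B hB'.1 with h | h | h | h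
    · exact h
    · have heq := Finset.eq_of_subset_of_card_le h (hBmax A hAC)
      exact le_of_eq heq.symm
    · exfalso
      rw [inter_empty_iff] at h
      exact h x h2 hB'.2.2.1
    · exfalso
      obtain ⟨p, hp⟩ := hPne
      rcases mem_union.mp (h ▸ mem_univ p) with h' | h'
      · rw [inter_empty_iff] at h1
        exact h1 p h' hp
      · rw [inter_empty_iff] at hB'
        exact hB'.2.1 p h' hp

end NNIP
namespace NNIP

open Finset

variable {n : ℕ}

lemma move (hn : 4 ≤ n) (T : TrivalentTree n) (P : Finset (Fin n)) (x : Fin n)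
    (hPne : P.Nonempty) (hxP : x ∉ P)
    (hPcomp : ∀ D ∈ T.splits, Compatible P D)
    (B : Finset (Fin n)) (hB : B ∈ T.splits)
    (hBP : B ∩ P = ∅) (hxB : x ∈ B) (hBPu : B ∪ P ≠ univ)
    (hBmax : ∀ A ∈ T.splits, A ∩ P = ∅ → x ∈ A → A ∪ P ≠ univ → A ⊆ B) :
    ∃ T' : TrivalentTree n, (NNIGraph n).Adj T T' ∧
      (∀ C ∈ T.splits, C ≠ B → C ≠ univ \ B → C ∈ T'.splits) ∧
      (insert x P ∈ T'.splits ∨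
       ∃ B' ∈ T'.splits, B' ∩ P = ∅ ∧ x ∈ B' ∧ B' ∪ P ≠ univ ∧
         (∀ A ∈ T'.splits, A ∩ P = ∅ → x ∈ A → A ∪ P ≠ univ → A ⊆ B') ∧
         B'.card < B.card) := by
  have hBne : B ≠ univ \ B := fun h => (mem_compl'.mp (h ▸ hxB)) hxB
  have hBnu : B ≠ univ := split_ne_univ hn T hB
  have hBPdisj : ∀ y ∈ B, y ∉ P := by
    rw [← inter_empty_iff]; exact hBP
  -- Step 1: the branch B1 of B containing x
  obtain ⟨B1, hxB1, hB1B, hB1ne, hB1max, hB1alt⟩ :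
      ∃ B1 : Finset (Fin n), x ∈ B1 ∧ B1 ⊆ B ∧ B1 ≠ B ∧
        (∀ A ∈ T.splits, A ⊆ B → A ≠ B → x ∈ A → A ⊆ B1) ∧
        (B1 ∈ T.splits ∨ B1 = {x}) := by
    set D := T.splits.filter (fun A => A ⊆ B ∧ A ≠ B ∧ x ∈ A) with hDdef
    rcases D.eq_empty_or_nonempty with hDe | hDne
    · refine ⟨{x}, mem_singleton_self x, singleton_subset_iff.mpr hxB, ?_, ?_, Or.inr rfl⟩
      · intro h
        have := (T.card_le B hB).1
        rw [← h] at this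
        simp at this
      · intro A hA h1 h2 h3
        exfalso
        have : A ∈ D := by rw [hDdef, mem_filter]; exact ⟨hA, h1, h2, h3⟩
        rw [hDe] at this
        exact Finset.notMem_empty _ this
    · obtain ⟨B1, hB1, hmax⟩ := D.exists_max_image Finset.card hDne
      have hB1' := hB1
      rw [hDdef, mem_filter] at hB1'
      refine ⟨B1, hB1'.2.2.2, hB1'.2.1, hB1'.2.2.1, ?_, Or.inl hB1'.1⟩
      intro A hA h1 h2 h3
      have hAD : A ∈ D := by rw [hDdef, mem_filter]; exact ⟨hA, h1, h2, h3⟩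
      rcases T.compat A hA B1 hB1'.1 with h | h | h | h
      · exact h
      · exact le_of_eq (Finset.eq_of_subset_of_card_le h (hmax A hAD)).symm
      · exfalso
        rw [inter_empty_iff] at h
        exact h x h3 hB1'.2.2.2
      · exfalso
        apply hBnu
        apply Finset.Subset.antisymm (subset_univ B)
        rw [← h]
        exact Finset.union_subset h1 hB1'.2.1
  set N : Finset (Fin n) := P ∪ B1 with hNdef
  have hxN : x ∈ N := mem_union_right _ hxB1
  have hPN : P ⊆ N := subset_union_left
  have hB1N : B1 ⊆ N := subset_union_right
  have hB1Pdisj : ∀ y ∈ B1, y ∉ P := fun y hy => hBPdisj y (hB1B hy)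
  obtain ⟨p, hp⟩ := hPne
  have hpN : p ∈ N := hPN hp
  have hpB : p ∉ B := fun h => hBPdisj p h hp
  obtain ⟨b2, hb2⟩ : (B \ B1).Nonempty := by
    rcases (B \ B1).eq_empty_or_nonempty with h | h
    · exfalso
      apply hB1ne
      apply Finset.Subset.antisymm hB1B
      intro y hy
      by_contra hy'
      exact Finset.notMem_empty y (h ▸ Finset.mem_sdiff.mpr ⟨hy, hy'⟩)
    · exact h
  rw [Finset.mem_sdiff] at hb2
  obtain ⟨c, hc⟩ : (univ \ (B ∪ P)).Nonempty := ne_univ_compl_nonempty hBPu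
  rw [mem_compl', Finset.mem_union] at hc
  push_neg at hc
  have hb2N : b2 ∉ N := by
    rw [hNdef, Finset.mem_union]
    push_neg
    exact ⟨hBPdisj b2 hb2.1, hb2.2⟩
  have hcN : c ∉ N := by
    rw [hNdef, Finset.mem_union]
    push_neg
    exact ⟨hc.2, fun h => hc.1 (hB1B h)⟩
  have hb2c : b2 ≠ c := fun h => hc.1 (h ▸ hb2.1)
  -- N is not a split of T and basic inequalities
  have hNB : N ≠ B := by
    intro h
    exact hBPdisj p (h ▸ hpN) hp
  have hNBc : N ≠ univ \ B := fun h => (mem_compl'.mp (h ▸ hxN)) hxB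
  have hNnotin : N ∉ T.splits := by
    intro hN
    rcases T.compat N hN B hB with h | h | h | h
    · exact hBPdisj p (h hpN) hp
    · -- B ⊆ N = P ∪ B1 forces B ⊆ B1
      have : B ⊆ B1 := by
        intro y hy
        rcases Finset.mem_union.mp (h hy) with h' | h'
        · exact absurd h' (hBPdisj y hy)
        · exact h'
      exact hB1ne (Finset.Subset.antisymm hB1B this)
    · rw [inter_empty_iff] at h
      exact h x hxN hxB
    · apply hBPu
      apply Finset.Subset.antisymm (subset_univ _)
      rw [← h]
      intro y hy
      rcases Finset.mem_union.mp hy with h' | h'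
      · rcases Finset.mem_union.mp h' with h'' | h''
        · exact Finset.mem_union_right _ h''
        · exact Finset.mem_union_left _ (hB1B h'')
      · exact Finset.mem_union_left _ h'
  have hNcnotin : univ \ N ∉ T.splits := by
    intro h
    have := T.compl_mem _ h
    rw [compl_compl'] at this
    exact hNnotin this
  have hNNc : N ≠ univ \ N := fun h => (mem_compl'.mp (h ▸ hxN)) hxN
  have hN2 : 2 ≤ N.card := by
    have : 1 < N.card := Finset.one_lt_card.mpr ⟨x, hxN, p, hpN, fun h => hxP (h ▸ hp)⟩
    omega
  have hNc2 : 2 ≤ (univ \ N).card := by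
    have : 1 < (univ \ N).card :=
      Finset.one_lt_card.mpr ⟨b2, mem_compl'.mpr hb2N, c, mem_compl'.mpr hcN, hb2c⟩
    omega
  have hNcard := compl_card N
  -- Step 3: N is compatible with all other splits
  have hkey : ∀ D ∈ T.splits, D ≠ B → D ≠ univ \ B → Compatible N D := by
    intro D hD hDB hDBc
    rcases hPcomp D hD with hPD | hDP | hPDe | hPDu
    · -- P ⊆ D
      by_cases hxD : x ∈ D
      · -- x ∈ D : show B1 ⊆ D or N ∪ D = univ
        rcases hB1alt with h1 | h1
        · rcases T.compat B1 h1 D hD with h | h | h | h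
          · exact Or.inl (Finset.union_subset hPD h)
          · exfalso
            exact hBPdisj p (hB1B (h (hPD hp))) hp
          · exfalso
            rw [inter_empty_iff] at h
            exact h x hxB1 hxD
          · right; right; right
            apply Finset.Subset.antisymm (subset_univ _)
            rw [← h]
            exact Finset.union_subset_union hB1N (Finset.Subset.refl D)
        · left
          apply Finset.union_subset hPD
          rw [h1]
          exact singleton_subset_iff.mpr hxD
      · -- x ∉ D
        rcases T.compat B hB D hD with h | h | h | h
        · exact absurd (h hxB) hxD
        · exact absurd (hPD hp) (fun hpB' => hBPdisj p (h hpB') hp)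
        · -- B ∩ D = ∅
          set E := univ \ D with hEdef
          have hE : E ∈ T.splits := T.compl_mem D hD
          have hxE : x ∈ E := mem_compl'.mpr hxD
          have hEP : E ∩ P = ∅ := by
            rw [inter_empty_iff]
            intro y hy hyP
            exact (mem_compl'.mp hy) (hPD hyP)
          have hBE : B ⊆ E := by
            intro y hy
            rw [hEdef, mem_compl']
            rw [inter_empty_iff] at h
            exact h y hy
          by_cases hEPu : E ∪ P = univ
          · -- D ⊆ P, so D = P ⊆ N
            right; left
            intro y hy
            apply hPN
            rw [union_univ_iff] at hEPu
            by_contra hyP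
            exact hyP (hEPu y (fun hE' => (mem_compl'.mp hE') hy))
          · exfalso
            have := hBmax E hE hEP hxE hEPu
            have hEB : E = B := Finset.Subset.antisymm this hBE
            apply hDBc
            rw [← hEB, hEdef, compl_compl']
        · -- B ∪ D = univ
          set E := univ \ D with hEdef
          have hE : E ∈ T.splits := T.compl_mem D hD
          have hxE : x ∈ E := mem_compl'.mpr hxD
          have hEB : E ⊆ B := by
            intro y hy
            rw [hEdef, mem_compl'] at hy
            rw [union_univ_iff] at h
            by_contra hyB
            exact hy (h y hyB)
          have hEneB : E ≠ B := by
            intro h'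
            apply hDBc
            rw [← h', hEdef, compl_compl']
          have hEB1 : E ⊆ B1 := hB1max E hE hEB hEneB hxE
          right; right; right
          rw [union_univ_iff]
          intro y hy
          by_contra hyD
          exact hy (hB1N (hEB1 (mem_compl'.mpr hyD)))
    · exact Or.inr (Or.inl (hDP.trans hPN))
    · -- P ∩ D = ∅
      by_cases hxD : x ∈ D
      · rcases T.compat B hB D hD with h | h | h | h
        · -- B ⊆ D
          by_cases hDPu : D ∪ P = univ
          · right; right; right
            apply Finset.Subset.antisymm (subset_univ _)
            rw [← hDPu]
            intro y hy
            rcases Finset.mem_union.mp hy with h' | h'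
            · exact Finset.mem_union_right _ h'
            · exact Finset.mem_union_left _ (hPN h')
          · exfalso
            have hDPe : D ∩ P = ∅ := by
              rw [inter_empty_iff]
              intro y hy hyP
              rw [inter_empty_iff] at hPDe
              exact hPDe y hyP hy
            have := hBmax D hD hDPe hxD hDPu
            exact hDB (Finset.Subset.antisymm this h)
        · -- D ⊆ B
          right; left
          exact (hB1max D hD h hDB hxD).trans hB1N
        · exfalso
          rw [inter_empty_iff] at h
          exact h x hxB hxD
        · exfalso
          have hpD : p ∈ D := by
            rcases Finset.mem_union.mp (h ▸ mem_univ p) with h' | h'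
            · exact absurd h' hpB
            · exact h'
          rw [inter_empty_iff] at hPDe
          exact hPDe p hp hpD
      · -- x ∉ D : N ∩ D = ∅ or D ⊆ N or N ∪ D = univ
        rcases hB1alt with h1 | h1
        · rcases T.compat B1 h1 D hD with h | h | h | h
          · exact absurd (h hxB1) hxD
          · exact Or.inr (Or.inl (h.trans hB1N))
          · right; right; left
            rw [inter_empty_iff]
            intro y hy hyD
            rcases Finset.mem_union.mp hy with h' | h'
            · rw [inter_empty_iff] at hPDe
              exact hPDe y h' hyD
            · rw [inter_empty_iff] at h
              exact h y h' hyD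
          · right; right; right
            apply Finset.Subset.antisymm (subset_univ _)
            rw [← h]
            exact Finset.union_subset_union hB1N (Finset.Subset.refl D)
        · right; right; left
          rw [inter_empty_iff]
          intro y hy hyD
          rcases Finset.mem_union.mp hy with h' | h'
          · rw [inter_empty_iff] at hPDe
            exact hPDe y h' hyD
          · rw [h1, Finset.mem_singleton] at h'
            exact hxD (h' ▸ hyD)
    · -- P ∪ D = univ
      right; right; right
      apply Finset.Subset.antisymm (subset_univ _)
      rw [← hPDu]
      exact Finset.union_subset_union hPN (Finset.Subset.refl D)
  -- Step 4: build the new tree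
  set E0 : Finset (Finset (Fin n)) := (T.splits.erase B).erase (univ \ B) with hE0
  set S' : Finset (Finset (Fin n)) := insert N (insert (univ \ N) E0) with hS'
  have hmemS' : ∀ C, C ∈ S' ↔ (C = N ∨ C = univ \ N ∨ (C ∈ T.splits ∧ C ≠ B ∧ C ≠ univ \ B)) := by
    intro C
    rw [hS', Finset.mem_insert, Finset.mem_insert, hE0, Finset.mem_erase, Finset.mem_erase]
    tauto
  have hBcmem : univ \ B ∈ T.splits := T.compl_mem B hB
  have hNcB1 : univ \ N ≠ B := fun h => (mem_compl'.mp (h ▸ hxB)) hxN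
  have hNcBc : univ \ N ≠ univ \ B := by
    intro h
    apply hNB
    rw [← compl_compl' N, h, compl_compl']
  have hcardS' : S'.card = T.splits.card := by
    have h1 : N ∉ insert (univ \ N) E0 := by
      rw [Finset.mem_insert]
      push_neg
      refine ⟨hNNc, ?_⟩
      rw [hE0, Finset.mem_erase, Finset.mem_erase]
      intro h
      exact hNnotin h.2.2
    have h2 : univ \ N ∉ E0 := by
      rw [hE0, Finset.mem_erase, Finset.mem_erase]
      intro h
      exact hNcnotin h.2.2
    have h3 : univ \ B ∈ T.splits.erase B := Finset.mem_erase.mpr ⟨Ne.symm hBne, hBcmem⟩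
    have h4 : 2 ≤ T.splits.card := by rw [T.card_eq]; omega
    rw [hS', Finset.card_insert_of_notMem h1, Finset.card_insert_of_notMem h2,
      hE0, Finset.card_erase_of_mem h3, Finset.card_erase_of_mem hB]
    omega
  have hcompS' : ∀ C ∈ S', Compatible N C := by
    intro C hC
    rcases (hmemS' C).mp hC with rfl | rfl | h
    · exact compat_self _
    · exact compat_compl_self N
    · exact hkey C h.1 h.2.1 h.2.2
  set T' : TrivalentTree n :=
    { splits := S'
      card_le := by
        intro A hA
        rcases (hmemS' A).mp hA with rfl | rfl | h
        · constructor
          · exact hN2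
          · omega
        · constructor
          · exact hNc2
          · omega
        · exact T.card_le A h.1
      compat := by
        intro A hA C hC
        rcases (hmemS' A).mp hA with rfl | rfl | h
        · exact hcompS' C hC
        · exact compat_compl (hcompS' C hC)
        · rcases (hmemS' C).mp hC with rfl | rfl | h'
          · exact compat_symm (hkey A h.1 h.2.1 h.2.2)
          · exact compat_symm (compat_compl (hkey A h.1 h.2.1 h.2.2))
          · exact T.compat A h.1 C h'.1
      compl_mem := by
        intro A hA
        rcases (hmemS' A).mp hA with rfl | rfl | h
        · exact (hmemS' _).mpr (Or.inr (Or.inl rfl))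
        · rw [compl_compl']
          exact (hmemS' _).mpr (Or.inl rfl)
        · refine (hmemS' _).mpr (Or.inr (Or.inr ⟨T.compl_mem A h.1, ?_, ?_⟩))
          · intro h'
            apply h.2.2
            rw [← compl_compl' A, h']
          · intro h'
            apply h.2.1
            rw [← compl_compl' A, h', compl_compl']
      card_eq := by rw [hcardS', T.card_eq] } with hT'
  have hT'splits : T'.splits = S' := rfl
  have hsd1 : T.splits \ S' = {B, univ \ B} := by
    ext C
    rw [Finset.mem_sdiff, hmemS' C, Finset.mem_insert, Finset.mem_singleton]
    constructor
    · rintro ⟨hC, hC'⟩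
      push_neg at hC'
      by_contra hcon
      push_neg at hcon
      exact hcon.2 (hC'.2.2 hC hcon.1)
    · rintro (rfl | rfl)
      · refine ⟨hB, ?_⟩
        push_neg
        exact ⟨hNB.symm, (Ne.symm hNcB1), fun _ h => absurd rfl h⟩
      · refine ⟨hBcmem, ?_⟩
        push_neg
        exact ⟨hNBc.symm, Ne.symm hNcBc, fun _ _ => rfl⟩
  have hsd2 : S' \ T.splits = {N, univ \ N} := by
    ext C
    rw [Finset.mem_sdiff, hmemS' C, Finset.mem_insert, Finset.mem_singleton]
    constructor
    · rintro ⟨hC, hC'⟩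
      rcases hC with rfl | rfl | h
      · exact Or.inl rfl
      · exact Or.inr rfl
      · exact absurd h.1 hC'
    · rintro (rfl | rfl)
      · exact ⟨Or.inl rfl, hNnotin⟩
      · exact ⟨Or.inr (Or.inl rfl), hNcnotin⟩
  have hAdj : (NNIGraph n).Adj T T' := by
    show (T.splits \ T'.splits).card = 2 ∧ (T'.splits \ T.splits).card = 2
    constructor
    · rw [hT'splits, hsd1]
      rw [Finset.card_insert_of_notMem (by simpa using hBne), Finset.card_singleton]
    · rw [hT'splits, hsd2]
      rw [Finset.card_insert_of_notMem (by simpa using hNNc), Finset.card_singleton]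
  refine ⟨T', hAdj, ?_, ?_⟩
  · intro C hC h1 h2
    rw [hT'splits, hmemS']
    exact Or.inr (Or.inr ⟨hC, h1, h2⟩)
  · rcases hB1alt with h1 | h1
    · -- B1 is a split: progress by smaller branch
      right
      refine ⟨B1, ?_, ?_, hxB1, ?_, ?_, ?_⟩
      · rw [hT'splits, hmemS']
        refine Or.inr (Or.inr ⟨h1, hB1ne, ?_⟩)
        intro h'
        exact (mem_compl'.mp (h' ▸ hxB1)) hxB
      · rw [inter_empty_iff]
        exact hB1Pdisj
      · intro h'
        rcases Finset.mem_union.mp (h' ▸ mem_univ c) with h'' | h''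
        · exact hc.1 (hB1B h'')
        · exact hc.2 h''
      · intro A hA ha1 ha2 ha3
        rw [hT'splits, hmemS'] at hA
        rcases hA with rfl | rfl | hA
        · exfalso
          rw [inter_empty_iff] at ha1
          exact ha1 p hpN hp
        · exact absurd hxN (mem_compl'.mp ha2)
        · exact hB1max A hA.1 (hBmax A hA.1 ha1 ha2 ha3) hA.2.1 ha2
      · exact Finset.card_lt_card (Finset.ssubset_iff_subset_ne.mpr ⟨hB1B, hB1ne⟩)
    · -- B1 = {x} : the new split is insert x P
      left
      rw [hT'splits, hmemS']
      left
      rw [hNdef, h1]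
      rw [Finset.union_comm, ← Finset.insert_eq]

end NNIP

namespace NNIP

open Finset

variable {n : ℕ}

/-- `T` contains all caterpillar splits up to level `j`. -/
def Pref (T : TrivalentTree n) (j : ℕ) : Prop := ∀ i, 2 ≤ i → i ≤ j → Iv n i ∈ T.splits

lemma P_nonempty (hn : 4 ≤ n) {j : ℕ} (h2 : 2 ≤ j) : (Iv n (j-1)).Nonempty := by
  apply Finset.card_pos.mp
  rw [card_Iv]
  omega

lemma x_not_P {j : ℕ} {x : Fin n} (hx : x.val + 1 = j) : x ∉ Iv n (j-1) := by
  rw [mem_Iv]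
  omega

lemma insert_x_P (hn : 4 ≤ n) {j : ℕ} (h2 : 2 ≤ j) (hjn : j ≤ n - 2) {x : Fin n}
    (hx : x.val + 1 = j) : insert x (Iv n (j-1)) = Iv n j := by
  ext v
  rw [Finset.mem_insert, mem_Iv, mem_Iv, Fin.ext_iff]
  have := v.isLt
  omega

lemma Pcomp (hn : 4 ≤ n) {j : ℕ} (h2 : 2 ≤ j) (T : TrivalentTree n)
    (hpre : Pref T (j-1)) : ∀ D ∈ T.splits, Compatible (Iv n (j-1)) D := by
  intro D hD
  by_cases hj3 : 3 ≤ j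
  · exact T.compat _ (hpre (j-1) (by omega) (le_refl _)) D hD
  · have hj2 : j = 2 := by omega
    subst hj2
    by_cases h0 : (⟨0, by omega⟩ : Fin n) ∈ D
    · left
      intro y hy
      rw [mem_Iv] at hy
      have : y = (⟨0, by omega⟩ : Fin n) := Fin.ext (by simp; omega)
      exact this ▸ h0
    · right; right; left
      rw [inter_empty_iff]
      intro y hy
      rw [mem_Iv] at hy
      have : y = (⟨0, by omega⟩ : Fin n) := Fin.ext (by simp; omega)
      exact this ▸ h0

lemma prefStep (hn : 4 ≤ n) (j : ℕ) (h2 : 2 ≤ j) (hjn : j ≤ n - 2) (x : Fin n)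
    (hx : x.val + 1 = j) :
    ∀ b : ℕ, ∀ T : TrivalentTree n, Pref T (j-1) →
    (Iv n j ∈ T.splits ∨ ∃ B ∈ T.splits, B ∩ Iv n (j-1) = ∅ ∧ x ∈ B ∧
       B ∪ Iv n (j-1) ≠ univ ∧
       (∀ A ∈ T.splits, A ∩ Iv n (j-1) = ∅ → x ∈ A → A ∪ Iv n (j-1) ≠ univ → A ⊆ B) ∧
       B.card ≤ b) →
    ∃ T', (NNIGraph n).Reachable T T' ∧ Pref T' j := by
  intro b
  induction b using Nat.strong_induction_on with
  | _ b ih =>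
    intro T hpre hyp
    rcases hyp with hmem | ⟨B, hB, hBP, hxB, hBPu, hBmax, hbcard⟩
    · refine ⟨T, SimpleGraph.Reachable.refl T, ?_⟩
      intro i hi hij
      by_cases h : i ≤ j - 1
      · exact hpre i hi h
      · have : i = j := by omega
        exact this ▸ hmem
    · obtain ⟨T', hAdj, hpres, hprog⟩ :=
        move hn T (Iv n (j-1)) x (P_nonempty hn h2) (x_not_P hx)
          (Pcomp hn h2 T hpre) B hB hBP hxB hBPu hBmax
      have hpre' : Pref T' (j-1) := by
        intro i hi hij
        apply hpres _ (hpre i hi hij)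
        · intro h
          have h0 : (⟨0, by omega⟩ : Fin n) ∈ Iv n i := zero_mem_Iv hn (by omega)
          have h0P : (⟨0, by omega⟩ : Fin n) ∈ Iv n (j-1) := zero_mem_Iv hn (by omega)
          rw [inter_empty_iff] at hBP
          exact hBP _ (h ▸ h0) h0P
        · intro h
          apply hBPu
          apply Finset.Subset.antisymm (subset_univ _)
          intro y _
          by_cases hyB : y ∈ B
          · exact Finset.mem_union_left _ hyB
          · apply Finset.mem_union_right
            have : y ∈ Iv n i := h ▸ mem_compl'.mpr hyB
            exact Iv_mono (show i ≤ j - 1 from hij) this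
      rcases hprog with hmem' | ⟨B', hB', h1, h2', h3, h4, h5⟩
      · refine ⟨T', hAdj.reachable, ?_⟩
        intro i hi hij
        by_cases h : i ≤ j - 1
        · exact hpre' i hi h
        · have : i = j := by omega
          subst this
          rw [← insert_x_P hn h2 hjn hx]
          exact hmem'
      · obtain ⟨T'', hreach, hpref⟩ := ih B'.card (by omega) T' hpre'
          (Or.inr ⟨B', hB', h1, h2', h3, h4, le_refl _⟩)
        exact ⟨T'', hAdj.reachable.trans hreach, hpref⟩

lemma toPref (hn : 4 ≤ n) (j : ℕ) (h2 : 2 ≤ j) (hjn : j ≤ n - 2)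
    (T : TrivalentTree n) (hpre : Pref T (j-1)) :
    ∃ T', (NNIGraph n).Reachable T T' ∧ Pref T' j := by
  have hxlt : j - 1 < n := by omega
  set x : Fin n := ⟨j - 1, hxlt⟩ with hxdef
  have hx : x.val + 1 = j := by
    show j - 1 + 1 = j
    omega
  by_cases hmem : Iv n j ∈ T.splits
  · exact prefStep hn j h2 hjn x hx 0 T hpre (Or.inl hmem)
  · have hIj : insert x (Iv n (j-1)) ∉ T.splits := by
      rw [insert_x_P hn h2 hjn hx]
      exact hmem
    have hI2 : 2 ≤ (insert x (Iv n (j-1))).card := by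
      rw [insert_x_P hn h2 hjn hx, card_Iv]
      omega
    have hIn : (insert x (Iv n (j-1))).card ≤ n - 2 := by
      rw [insert_x_P hn h2 hjn hx, card_Iv]
      omega
    obtain ⟨B, hB, hBP, hxB, hBPu, hBmax⟩ :=
      exists_B hn T (Iv n (j-1)) x (P_nonempty hn h2) (x_not_P hx) hI2 hIn
        (Pcomp hn h2 T hpre) hIj
    exact prefStep hn j h2 hjn x hx B.card T hpre
      (Or.inr ⟨B, hB, hBP, hxB, hBPu, hBmax, le_refl _⟩)

lemma reach_full (hn : 4 ≤ n) : ∀ j, j ≤ n - 2 → ∀ T : TrivalentTree n,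
    ∃ T', (NNIGraph n).Reachable T T' ∧ Pref T' j := by
  intro j
  induction j with
  | zero =>
    intro _ T
    exact ⟨T, SimpleGraph.Reachable.refl T, fun i hi hij => by omega⟩
  | succ j ihj =>
    intro hj T
    by_cases h2 : 2 ≤ j + 1
    · obtain ⟨T1, hr1, hp1⟩ := ihj (by omega) T
      obtain ⟨T2, hr2, hp2⟩ := toPref hn (j+1) h2 hj T1 (by simpa using hp1)
      exact ⟨T2, hr1.trans hr2, hp2⟩
    · exact ⟨T, SimpleGraph.Reachable.refl T, fun i hi hij => by omega⟩

lemma pref_max_eq (hn : 4 ≤ n) (T : TrivalentTree n) (h : Pref T (n-2)) :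
    T.splits = catSplits n := by
  have hsub : catSplits n ⊆ T.splits := by
    intro A hA
    obtain ⟨k, h1, h2, (rfl | rfl)⟩ := mem_catSplits.mp hA
    · exact h k h1 h2
    · exact T.compl_mem _ (h k h1 h2)
  exact (Finset.eq_of_subset_of_card_le hsub
    (by rw [T.card_eq, catSplits_card hn])).symm

lemma tree_ext (T T' : TrivalentTree n) (h : T.splits = T'.splits) : T = T' := by
  cases T
  cases T'
  dsimp at h
  subst h
  rfl

end NNIP

/-- The NNI graph on trivalent trees with n ≥ 4 labeled leaves is connected:
tropical M_{0,n} is connected in codimension 1. -/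
theorem NNIGraph_connected (n : ℕ) (hn : 4 ≤ n) : (NNIGraph n).Connected := by
  rw [SimpleGraph.connected_iff]
  refine ⟨?_, ⟨NNIP.cat hn⟩⟩
  intro T T'
  obtain ⟨T1, hr1, hp1⟩ := NNIP.reach_full hn (n-2) (le_refl _) T
  obtain ⟨T2, hr2, hp2⟩ := NNIP.reach_full hn (n-2) (le_refl _) T'
  have heq : T1 = T2 := NNIP.tree_ext _ _
    (by rw [NNIP.pref_max_eq hn T1 hp1, NNIP.pref_max_eq hn T2 hp2])
  exact hr1.trans (heq ▸ hr2.symm)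
end

section
/- Let T be a finite tree with n ≥ 4 leaves, labeled bijectively by {1,…,n}, in which every non-leaf vertex has degree 3. Call T a caterpillar if every degree-3 vertex of T is adjacent to at least one leaf. Then T can be transformed into a caterpillar by a finite sequence of NNI moves (contracting one internal edge and re-expanding the resulting degree-4 vertex in a different way). -/
/-- A caterpillar tree: for some ordering π of the leaves, the splits are
exactly the prefixes {i : π(i) < k} for 2 ≤ k ≤ n-2 and their complements.
Equivalently, every internal (degree-3) vertex of the tree is adjacent to a
leaf. -/
def IsCaterpillar {n : ℕ} (T : TrivalentTree n) : Prop :=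
  ∃ π : Fin n ≃ Fin n,
    T.splits =
      ((Finset.Icc 2 (n - 2)).image fun k =>
          Finset.univ.filter fun i => (π i : ℕ) < k) ∪
      ((Finset.Icc 2 (n - 2)).image fun k =>
          Finset.univ.filter fun i => k ≤ (π i : ℕ))


open Finset

namespace NNIProof

variable {n : ℕ}

lemma compat_symm {A B : Finset (Fin n)} (h : Compatible A B) : Compatible B A := by
  rcases h with h|h|h|h
  · exact Or.inr (Or.inl h)
  · exact Or.inl h
  · exact Or.inr (Or.inr (Or.inl (by rw [inter_comm]; exact h)))
  · exact Or.inr (Or.inr (Or.inr (by rw [union_comm]; exact h)))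

lemma compl_compl' (A : Finset (Fin n)) : univ \ (univ \ A) = A := by
  rw [sdiff_sdiff_self_left, univ_inter]

lemma compat_compl_right {A B : Finset (Fin n)} (h : Compatible A B) :
    Compatible A (univ \ B) := by
  rcases h with h|h|h|h
  · refine Or.inr (Or.inr (Or.inl ?_))
    ext x; simp only [mem_inter, mem_sdiff, mem_univ, true_and, notMem_empty, iff_false]
    rintro ⟨hx, hx2⟩; exact hx2 (h hx)
  · refine Or.inr (Or.inr (Or.inr ?_))
    ext x; simp only [mem_union, mem_sdiff, mem_univ, true_and, iff_true]
    by_cases hx : x ∈ B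
    · exact Or.inl (h hx)
    · exact Or.inr hx
  · refine Or.inl ?_
    intro x hx; simp only [mem_sdiff, mem_univ, true_and]
    intro hxB; exact (notMem_empty x) (h ▸ mem_inter.mpr ⟨hx, hxB⟩)
  · refine Or.inr (Or.inl ?_)
    intro x hx; simp only [mem_sdiff, mem_univ, true_and] at hx
    have := mem_univ (α := Fin n) x
    rw [← h, mem_union] at this
    exact this.resolve_right hx

lemma laminar_compat {A B : Finset (Fin n)} (h : A ⊆ B ∨ B ⊆ A ∨ A ∩ B = ∅) :
    Compatible A B := by
  rcases h with h|h|h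
  · exact Or.inl h
  · exact Or.inr (Or.inl h)
  · exact Or.inr (Or.inr (Or.inl h))

lemma lam0 (T : TrivalentTree n) (z0 : Fin n) :
    ∀ M ∈ T.splits, ∀ N ∈ T.splits, z0 ∉ M → z0 ∉ N →
      M ⊆ N ∨ N ⊆ M ∨ M ∩ N = ∅ := by
  intro M hM N hN hzM hzN
  rcases T.compat M hM N hN with h|h|h|h
  · exact Or.inl h
  · exact Or.inr (Or.inl h)
  · exact Or.inr (Or.inr h)
  · exfalso
    have := mem_univ (α := Fin n) z0
    rw [← h, mem_union] at this
    rcases this with h'|h' <;> [exact hzM h'; exact hzN h']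

lemma exists_part (T : TrivalentTree n) (z0 : Fin n) (A : Finset (Fin n))
    (hA : A ∈ T.splits) (hAcard : 2 ≤ A.card) :
    ∃ A1 : Finset (Fin n), A1 ⊆ A ∧ A1.Nonempty ∧ A1 ≠ A ∧ A1.card < A.card ∧
      ∀ M ∈ T.splits, z0 ∉ M → M ⊆ A → M ≠ A → M ⊆ A1 ∨ M ∩ A1 = ∅ := by
  classical
  set C := T.splits.filter (fun M => z0 ∉ M ∧ M ⊆ A ∧ M ≠ A) with hC
  rcases C.eq_empty_or_nonempty with hCe | hCne
  · obtain ⟨x, hx⟩ : A.Nonempty := card_pos.mp (by omega)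
    refine ⟨{x}, by simpa using hx, singleton_nonempty x, ?_, ?_, ?_⟩
    · intro h; rw [← h] at hAcard; simp at hAcard
    · have : ({x} : Finset (Fin n)).card = 1 := card_singleton x
      omega
    · intro M hM hzM hMA hMne
      exfalso
      have : M ∈ C := by rw [hC, mem_filter]; exact ⟨hM, hzM, hMA, hMne⟩
      rw [hCe] at this; exact notMem_empty M this
  · obtain ⟨A1, hA1C, hA1max⟩ := C.exists_maximal hCne
    rw [hC, mem_filter] at hA1C
    obtain ⟨hA1s, hzA1, hA1A, hA1ne⟩ := hA1C
    have hA1card : 2 ≤ A1.card := (T.card_le A1 hA1s).1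
    refine ⟨A1, hA1A, card_pos.mp (by omega), hA1ne,
      card_lt_card (lt_of_le_of_ne hA1A hA1ne), ?_⟩
    intro M hM hzM hMA hMne
    rcases lam0 T z0 M hM A1 hA1s hzM hzA1 with h|h|h
    · exact Or.inl h
    · -- A1 ⊆ M: maximality forces M = A1
      have hMC : M ∈ C := by rw [hC, mem_filter]; exact ⟨hM, hzM, hMA, hMne⟩
      rcases eq_or_ne M A1 with rfl|hne'
      · exact Or.inl subset_rfl
      · exact absurd (lt_of_le_of_ne h (Ne.symm hne')) (fun hlt => lt_irrefl _ (lt_of_lt_of_le hlt (hA1max hMC h)))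
    · exact Or.inr h

lemma rotation (hn : 4 ≤ n) (T : TrivalentTree n) (z0 : Fin n)
    (A B A1 : Finset (Fin n))
    (hA : A ∈ T.splits) (hz0A : z0 ∉ A)
    (hB : B ∈ T.splits) (hz0B : z0 ∉ B)
    (hABdisj : A ∩ B = ∅)
    (hsib : A ∪ B ∈ T.splits ∨ A ∪ B = univ \ {z0})
    (hA1 : A1 ⊆ A) (hA1ne : A1.Nonempty) (hA1neA : A1 ≠ A)
    (hpart : ∀ M ∈ T.splits, z0 ∉ M → M ⊆ A → M ≠ A → M ⊆ A1 ∨ M ∩ A1 = ∅)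
    (hgain : A1.card < B.card) :
    ∃ T' : TrivalentTree n, (NNIGraph n).Adj T T' ∧
      ∑ X ∈ T.splits.filter (fun X => z0 ∉ X), X.card <
      ∑ X ∈ T'.splits.filter (fun X => z0 ∉ X), X.card := by
  classical
  have hAcard := T.card_le A hA
  have hBcard := T.card_le B hB
  have hAne : A.Nonempty := card_pos.mp (by omega)
  have hBne : B.Nonempty := card_pos.mp (by omega)
  set B' : Finset (Fin n) := (A \ A1) ∪ B with hB'def
  have hdisjAB : ∀ x, x ∈ A → x ∈ B → False := by
    intro x h1 h2
    exact (notMem_empty x) (hABdisj ▸ mem_inter.mpr ⟨h1, h2⟩)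
  have hz0B' : z0 ∉ B' := by
    rw [hB'def, mem_union, mem_sdiff]
    rintro (⟨h, _⟩|h) <;> [exact hz0A h; exact hz0B h]
  have hA1B'disj : ∀ x, x ∈ A1 → x ∈ B' → False := by
    intro x h1 h2
    rw [hB'def, mem_union, mem_sdiff] at h2
    rcases h2 with ⟨_, h3⟩|h3
    · exact h3 h1
    · exact hdisjAB x (hA1 h1) h3
  have hBsubB' : B ⊆ B' := by rw [hB'def]; exact subset_union_right
  have hB'card2 : 2 ≤ B'.card := le_trans hBcard.1 (card_le_card hBsubB')
  have hA1ssub : A1 ⊂ A := lt_of_le_of_ne hA1 hA1neA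
  have hA1cardlt : A1.card < A.card := card_lt_card hA1ssub
  have hB'sub : B' ⊆ univ \ (insert z0 A1) := by
    intro x hx
    rw [mem_sdiff, mem_insert]
    refine ⟨mem_univ x, ?_⟩
    rintro (rfl|h)
    · exact hz0B' hx
    · exact hA1B'disj x h hx
  have hB'lecard : B'.card ≤ n - 2 := by
    have h1 := card_le_card hB'sub
    have h2 : (univ \ (insert z0 A1)).card = n - (insert z0 A1).card := by
      rw [card_sdiff_of_subset (subset_univ _), card_univ, Fintype.card_fin]
    have h3 : (insert z0 A1).card = A1.card + 1 := by
      rw [card_insert_of_notMem (fun h => hz0A (hA1 h))]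
    have h4 : 1 ≤ A1.card := card_pos.mpr hA1ne
    omega
  -- B' is "laminar" with every old split avoiding z0, other than A
  have hz0sib : z0 ∉ A ∪ B := by
    rw [mem_union]; rintro (h|h) <;> [exact hz0A h; exact hz0B h]
  have lam' : ∀ M ∈ T.splits, z0 ∉ M → M ≠ A →
      B' ⊆ M ∨ M ⊆ B' ∨ B' ∩ M = ∅ := by
    intro M hM hzM hMneA
    rcases lam0 T z0 M hM A hA hzM hz0A with hMA | hAM | hMAd
    · -- M ⊆ A
      rcases hpart M hM hzM hMA hMneA with h|h
      · refine Or.inr (Or.inr ?_)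
        ext x; simp only [mem_inter, notMem_empty, iff_false]
        rintro ⟨h1, h2⟩
        exact hA1B'disj x (h h2) h1
      · refine Or.inr (Or.inl ?_)
        intro x hx
        rw [hB'def, mem_union, mem_sdiff]
        exact Or.inl ⟨hMA hx, fun hx1 => (notMem_empty x) (h ▸ mem_inter.mpr ⟨hx, hx1⟩)⟩
    · -- A ⊆ M, M ≠ A : show B ⊆ M, hence B' ⊆ M
      have hBM : B ⊆ M := by
        rcases lam0 T z0 M hM B hB hzM hz0B with h|h|h
        · -- M ⊆ B: A ⊆ B, contradiction
          exfalso
          obtain ⟨a, ha⟩ := hAne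
          exact hdisjAB a ha (h (hAM ha))
        · exact h
        · -- M ∩ B = ∅: contradiction
          exfalso
          rcases hsib with hP | hS
          · rcases lam0 T z0 M hM (A ∪ B) hP hzM hz0sib with h'|h'|h'
            · -- M ⊆ A ∪ B and M ∩ B = ∅ ⇒ M ⊆ A ⇒ M = A
              have : M ⊆ A := by
                intro x hx
                rcases mem_union.mp (h' hx) with h''|h''
                · exact h''
                · exact absurd (mem_inter.mpr ⟨hx, h''⟩) (by rw [h]; exact notMem_empty x)
              exact hMneA (le_antisymm this hAM)
            · obtain ⟨b, hb⟩ := hBne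
              have : b ∈ M := h' (mem_union_right _ hb)
              exact (notMem_empty b) (h ▸ mem_inter.mpr ⟨this, hb⟩)
            · obtain ⟨a, ha⟩ := hAne
              exact (notMem_empty a) (h' ▸ mem_inter.mpr ⟨hAM ha, mem_union_left _ ha⟩)
          · -- A ∪ B = univ \ {z0}
            have hMsub : M ⊆ A ∪ B := by
              rw [hS]; intro x hx
              rw [mem_sdiff, mem_singleton]
              exact ⟨mem_univ x, fun h' => hzM (h' ▸ hx)⟩
            have : M ⊆ A := by
              intro x hx
              rcases mem_union.mp (hMsub hx) with h''|h''
              · exact h''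
              · exact absurd (mem_inter.mpr ⟨hx, h''⟩) (by rw [h]; exact notMem_empty x)
            exact hMneA (le_antisymm this hAM)
      refine Or.inl ?_
      intro x hx
      rw [hB'def, mem_union, mem_sdiff] at hx
      rcases hx with ⟨h1, _⟩|h1
      · exact hAM h1
      · exact hBM h1
    · -- M ∩ A = ∅
      have hMAd' : ∀ x, x ∈ M → x ∈ A → False := by
        intro x h1 h2
        exact (notMem_empty x) (hMAd ▸ mem_inter.mpr ⟨h1, h2⟩)
      rcases lam0 T z0 M hM B hB hzM hz0B with h|h|h
      · exact Or.inr (Or.inl (h.trans hBsubB'))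
      · -- B ⊆ M : show M = B
        have hMB : M ⊆ B := by
          rcases hsib with hP | hS
          · rcases lam0 T z0 M hM (A ∪ B) hP hzM hz0sib with h'|h'|h'
            · intro x hx
              rcases mem_union.mp (h' hx) with h''|h''
              · exact absurd h'' (fun h3 => hMAd' x hx h3)
              · exact h''
            · exfalso
              obtain ⟨a, ha⟩ := hAne
              exact hMAd' a (h' (mem_union_left _ ha)) ha
            · exfalso
              obtain ⟨b, hb⟩ := hBne
              exact (notMem_empty b) (h' ▸ mem_inter.mpr ⟨h hb, mem_union_right _ hb⟩)
          · intro x hx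
            have : x ∈ A ∪ B := by
              rw [hS, mem_sdiff, mem_singleton]
              exact ⟨mem_univ x, fun h' => hzM (h' ▸ hx)⟩
            rcases mem_union.mp this with h''|h''
            · exact absurd h'' (fun h3 => hMAd' x hx h3)
            · exact h''
        have : M = B := le_antisymm hMB h
        exact Or.inr (Or.inl (this ▸ hBsubB'))
      · -- M ∩ B = ∅
        refine Or.inr (Or.inr ?_)
        ext x; simp only [mem_inter, notMem_empty, iff_false]
        rintro ⟨h1, h2⟩
        rw [hB'def, mem_union, mem_sdiff] at h1
        rcases h1 with ⟨h3, _⟩|h3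
        · exact hMAd' x h2 h3
        · exact (notMem_empty x) (h ▸ mem_inter.mpr ⟨h2, h3⟩)
  -- compatibility of B' with all old splits except A, univ\A
  have key : ∀ M ∈ T.splits, M ≠ A → M ≠ univ \ A → Compatible B' M := by
    intro M hM h1 h2
    by_cases hzM : z0 ∈ M
    · have hM0 : univ \ M ∈ T.splits := T.compl_mem M hM
      have hzM0 : z0 ∉ univ \ M := by rw [mem_sdiff]; push_neg; intro _; exact hzM
      have hM0ne : univ \ M ≠ A := by
        intro h; apply h2; rw [← compl_compl' M, h]
      have hc := compat_compl_right (laminar_compat (lam' (univ \ M) hM0 hzM0 hM0ne))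
      rwa [compl_compl'] at hc
    · exact laminar_compat (lam' M hM hzM h1)
  have hB'notin : B' ∉ T.splits := by
    intro hmem
    rcases T.compat A hA B' hmem with h|h|h|h
    · obtain ⟨x, hx⟩ := hA1ne
      exact hA1B'disj x hx (h (hA1 hx))
    · obtain ⟨b, hb⟩ := hBne
      exact hdisjAB b (h (hBsubB' hb)) hb
    · have hne2 : (A \ A1).Nonempty := by
        rw [sdiff_nonempty]; intro hsub; exact hA1neA (le_antisymm hA1 hsub)
      obtain ⟨x, hx⟩ := hne2
      have hx2 : x ∈ B' := by rw [hB'def, mem_union]; exact Or.inl hx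
      exact (notMem_empty x) (h ▸ mem_inter.mpr ⟨sdiff_subset hx, hx2⟩)
    · have hz := mem_univ (α := Fin n) z0
      rw [← h, mem_union] at hz
      rcases hz with h'|h' <;> [exact hz0A h'; exact hz0B' h']
  have hBc'notin : univ \ B' ∉ T.splits := by
    intro hmem
    have h := T.compl_mem _ hmem
    rw [compl_compl'] at h
    exact hB'notin h
  have hAc : univ \ A ∈ T.splits := T.compl_mem A hA
  have hz0Ac : z0 ∈ univ \ A := mem_sdiff.mpr ⟨mem_univ _, hz0A⟩
  have hz0Bc' : z0 ∈ univ \ B' := mem_sdiff.mpr ⟨mem_univ _, hz0B'⟩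
  have hAneAc : A ≠ univ \ A := fun h => hz0A (by rw [h]; exact hz0Ac)
  have hB'neA : B' ≠ A := fun h => by
    obtain ⟨b, hb⟩ := hBne; exact hdisjAB b (h ▸ hBsubB' hb) hb
  have hB'neAc : B' ≠ univ \ A := fun h => hz0B' (by rw [h]; exact hz0Ac)
  have hB'neBc' : B' ≠ univ \ B' := fun h => hz0B' (by rw [h]; exact hz0Bc')
  have hBc'neA : univ \ B' ≠ A := fun h => hz0A (by rw [← h]; exact hz0Bc')
  have hBc'neAc : univ \ B' ≠ univ \ A := fun h => by
    have h2 : B' = A := by rw [← compl_compl' B', h, compl_compl']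
    exact hB'neA h2
  classical
  set S2 : Finset (Finset (Fin n)) := (T.splits.erase A).erase (univ \ A) with hS2
  have hS2mem : ∀ X, X ∈ S2 ↔ X ∈ T.splits ∧ X ≠ A ∧ X ≠ univ \ A := by
    intro X; rw [hS2, mem_erase, mem_erase]; tauto
  set splits' := insert B' (insert (univ \ B') S2) with hsplits'
  have hmem' : ∀ X, X ∈ splits' ↔ X = B' ∨ X = univ \ B' ∨ (X ∈ T.splits ∧ X ≠ A ∧ X ≠ univ \ A) := by
    intro X; rw [hsplits', mem_insert, mem_insert, hS2mem]
  have h1 : univ \ A ∈ T.splits.erase A := mem_erase.mpr ⟨hAneAc.symm, hAc⟩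
  have hS2card : S2.card = T.splits.card - 2 := by
    rw [hS2, card_erase_of_mem h1, card_erase_of_mem hA]
    omega
  have hB'notS2 : B' ∉ insert (univ \ B') S2 := by
    rw [mem_insert, hS2mem]
    rintro (h|⟨h,_,_⟩) <;> [exact hB'neBc' h; exact hB'notin h]
  have hBc'notS2 : univ \ B' ∉ S2 := by
    rw [hS2mem]
    rintro ⟨h,_,_⟩; exact hBc'notin h
  have hsplits'card : splits'.card = 2 * (n - 3) := by
    rw [hsplits', card_insert_of_notMem hB'notS2, card_insert_of_notMem hBc'notS2, hS2card,
      T.card_eq]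
    omega
  have hBc'card : (univ \ B').card = n - B'.card := by
    rw [card_sdiff_of_subset (subset_univ _), card_univ, Fintype.card_fin]
  have hB'Bc' : Compatible B' (univ \ B') := by
    refine Or.inr (Or.inr (Or.inl ?_))
    ext x
    simp only [mem_inter, mem_sdiff, mem_univ, true_and, notMem_empty, iff_false]
    rintro ⟨hx1, hx2⟩; exact hx2 hx1
  refine ⟨⟨splits', ?_, ?_, ?_, hsplits'card⟩, ?_, ?_⟩
  · -- card_le
    intro X hX
    rcases (hmem' X).mp hX with rfl|rfl|⟨h, _, _⟩
    · exact ⟨hB'card2, hB'lecard⟩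
    · constructor <;> omega
    · exact T.card_le X h
  · -- compat
    intro X hX Y hY
    rcases (hmem' X).mp hX with rfl|rfl|⟨hX1, hX2, hX3⟩ <;>
      rcases (hmem' Y).mp hY with rfl|rfl|⟨hY1, hY2, hY3⟩
    · exact Or.inl subset_rfl
    · exact hB'Bc'
    · exact key Y hY1 hY2 hY3
    · exact compat_symm hB'Bc'
    · exact Or.inl subset_rfl
    · exact compat_symm (compat_compl_right (compat_symm (key Y hY1 hY2 hY3)))
    · exact compat_symm (key X hX1 hX2 hX3)
    · exact compat_compl_right (compat_symm (key X hX1 hX2 hX3))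
    · exact T.compat X hX1 Y hY1
  · -- compl_mem
    intro X hX
    rcases (hmem' X).mp hX with rfl|rfl|⟨h, h2, h3⟩
    · exact (hmem' _).mpr (Or.inr (Or.inl rfl))
    · rw [compl_compl']; exact (hmem' _).mpr (Or.inl rfl)
    · refine (hmem' _).mpr (Or.inr (Or.inr ⟨T.compl_mem X h, ?_, ?_⟩))
      · intro he; exact h3 (by rw [← compl_compl' X, he])
      · intro he; exact h2 (by rw [← compl_compl' X, he, compl_compl'])
  · -- adjacency
    refine (⟨?_, ?_⟩ : _ ∧ _)
    · have hset : T.splits \ splits' = {A, univ \ A} := by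
        ext X
        rw [mem_sdiff, hmem' X, mem_insert, mem_singleton]
        constructor
        · rintro ⟨hXs, hX2⟩
          by_contra hcon
          push_neg at hcon
          exact hX2 (Or.inr (Or.inr ⟨hXs, hcon.1, hcon.2⟩))
        · rintro (rfl|rfl)
          · refine ⟨hA, ?_⟩
            rintro (h|h|⟨_,h,_⟩) <;> [exact hB'neA h.symm; exact hBc'neA h.symm; exact h rfl]
          · refine ⟨hAc, ?_⟩
            rintro (h|h|⟨_,_,h⟩) <;> [exact hB'neAc h.symm; exact hBc'neAc h.symm; exact h rfl]
      rw [hset, card_pair hAneAc]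
    · have hset : splits' \ T.splits = {B', univ \ B'} := by
        ext X
        rw [mem_sdiff, hmem' X, mem_insert, mem_singleton]
        constructor
        · rintro ⟨h1|h1|⟨h1,_⟩, h2⟩
          · exact Or.inl h1
          · exact Or.inr h1
          · exact absurd h1 h2
        · rintro (rfl|rfl)
          · exact ⟨Or.inl rfl, hB'notin⟩
          · exact ⟨Or.inr (Or.inl rfl), hBc'notin⟩
      rw [hset, card_pair hB'neBc']
  · -- sum increases
    have hF' : splits'.filter (fun X => z0 ∉ X)
        = insert B' ((T.splits.filter (fun X => z0 ∉ X)).erase A) := by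
      ext X
      rw [mem_filter, hmem', mem_insert, mem_erase, mem_filter]
      constructor
      · rintro ⟨rfl|rfl|⟨h1,h2,h3⟩, hz⟩
        · exact Or.inl rfl
        · exact absurd hz0Bc' hz
        · exact Or.inr ⟨h2, h1, hz⟩
      · rintro (rfl|⟨h1,h2,h3⟩)
        · exact ⟨Or.inl rfl, hz0B'⟩
        · refine ⟨Or.inr (Or.inr ⟨h2, h1, fun he => h3 (by rw [he]; exact hz0Ac)⟩), h3⟩
    rw [hF']
    have hAinF : A ∈ T.splits.filter (fun X => z0 ∉ X) := mem_filter.mpr ⟨hA, hz0A⟩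
    have hB'notinF : B' ∉ (T.splits.filter (fun X => z0 ∉ X)).erase A := by
      rw [mem_erase, mem_filter]; rintro ⟨_, h, _⟩; exact hB'notin h
    rw [sum_insert hB'notinF]
    have hsum : (∑ X ∈ (T.splits.filter (fun X => z0 ∉ X)).erase A, X.card) + A.card
        = ∑ X ∈ T.splits.filter (fun X => z0 ∉ X), X.card :=
      sum_erase_add (T.splits.filter (fun X => z0 ∉ X)) (fun X => X.card) hAinF
    have hB'gt : A.card < B'.card := by
      have h5 : B'.card = (A \ A1).card + B.card := by
        rw [hB'def]
        exact card_union_of_disjoint (by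
          rw [disjoint_left]; intro x hx1 hx2; exact hdisjAB x (sdiff_subset hx1) hx2)
      have h6 : (A \ A1).card = A.card - A1.card := card_sdiff_of_subset hA1
      omega
    omega


lemma laminar_struct (m : ℕ) : ∀ (S : Finset (Fin n)) (F : Finset (Finset (Fin n))),
    S.card = m → (∀ A ∈ F, A ⊆ S ∧ 2 ≤ A.card ∧ A ≠ S) →
    (∀ A ∈ F, ∀ B ∈ F, A ⊆ B ∨ B ⊆ A ∨ A ∩ B = ∅) →
    (F.card ≤ m - 2) ∧
    (F.card = m - 2 → (∃ A ∈ F, ∃ B ∈ F, A ∩ B = ∅) →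
      ∃ A ∈ F, ∃ B ∈ F, A ∩ B = ∅ ∧ (A ∪ B ∈ F ∨ A ∪ B = S)) := by
  induction m using Nat.strong_induction_on with
  | _ m IH =>
  intro S F hS hmem hlam
  rcases F.eq_empty_or_nonempty with rfl | hne
  · refine ⟨by simp, fun _ h => ?_⟩
    simp at h
  obtain ⟨M, hM, hMmax⟩ := F.exists_maximal hne
  -- every other member is ⊆ M or disjoint from M
  have hsplit : ∀ X ∈ F, X = M ∨ X ⊆ M ∨ X ∩ M = ∅ := by
    intro X hX
    rcases hlam X hX M hM with h|h|h
    · exact Or.inr (Or.inl h)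
    · rcases eq_or_ne X M with rfl|hne'
      · exact Or.inl rfl
      · exact absurd (lt_of_le_of_ne h (Ne.symm hne')) (fun hlt => lt_irrefl _ (lt_of_lt_of_le hlt (hMmax hX h)))
    · exact Or.inr (Or.inr h)
  set Fin' := F.filter (· ⊆ M) with hFin'
  set Fout := F.filter (fun X => X ∩ M = ∅) with hFout
  have hMin : M ∈ Fin' := mem_filter.mpr ⟨hM, subset_rfl⟩
  have hFunion : F = Fin' ∪ Fout := by
    ext X
    simp only [hFin', hFout, mem_union, mem_filter]
    constructor
    · intro hX
      rcases hsplit X hX with rfl|h|h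
      · exact Or.inl ⟨hX, subset_rfl⟩
      · exact Or.inl ⟨hX, h⟩
      · exact Or.inr ⟨hX, h⟩
    · rintro (⟨h,_⟩|⟨h,_⟩) <;> exact h
  have hdisj : Disjoint Fin' Fout := by
    rw [disjoint_left]
    intro X h1 h2
    rw [hFin', mem_filter] at h1
    rw [hFout, mem_filter] at h2
    have h2card := (hmem X h1.1).2.1
    have : X = ∅ := by
      ext x; simp only [notMem_empty, iff_false]
      intro hx
      exact (notMem_empty x) (h2.2 ▸ mem_inter.mpr ⟨hx, h1.2 hx⟩)
    simp [this] at h2card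
  have hcardFF : F.card = Fin'.card + Fout.card := by
    rw [hFunion, card_union_of_disjoint hdisj]
  have hMS : M ⊆ S := (hmem M hM).1
  have hMcard : 2 ≤ M.card := (hmem M hM).2.1
  have hMne : M ≠ S := (hmem M hM).2.2
  have hMlt : M.card < m := by
    rw [← hS]
    exact card_lt_card (lt_of_le_of_ne hMS hMne)
  -- inner family
  have hinner := IH M.card hMlt M (Fin'.erase M) rfl
    (fun A hA => by
      rw [mem_erase, hFin', mem_filter] at hA
      exact ⟨hA.2.2, (hmem A hA.2.1).2.1, hA.1⟩)
    (fun A hA B hB => hlam A (by rw [mem_erase, hFin', mem_filter] at hA; exact hA.2.1)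
      B (by rw [mem_erase, hFin', mem_filter] at hB; exact hB.2.1))
  have hFinCard : Fin'.card ≤ M.card - 1 := by
    have := hinner.1
    have h2 : (Fin'.erase M).card = Fin'.card - 1 := card_erase_of_mem hMin
    have h3 : 1 ≤ Fin'.card := card_pos.mpr ⟨M, hMin⟩
    have h4 : 2 ≤ M.card := hMcard
    omega
  -- outer family: subsets of S \ M
  have houtmem : ∀ A ∈ Fout, A ⊆ S \ M := by
    intro A hA
    rw [hFout, mem_filter] at hA
    intro x hx
    rw [mem_sdiff]
    refine ⟨(hmem A hA.1).1 hx, fun hxM => ?_⟩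
    exact (notMem_empty x) (hA.2 ▸ mem_inter.mpr ⟨hx, hxM⟩)
  have hSMcard : (S \ M).card = m - M.card := by
    rw [card_sdiff_of_subset hMS, hS]
  have hSMlt : (S \ M).card < m := by
    rw [hSMcard]; omega
  by_cases hSM : S \ M ∈ F
  · -- siblings M, S\M found directly; and the bound
    have hMdisj : M ∩ (S \ M) = ∅ := by
      ext x; simp only [mem_inter, mem_sdiff, notMem_empty, iff_false]
      rintro ⟨h1, _, h2⟩; exact h2 h1
    have hMun : M ∪ (S \ M) = S := union_sdiff_of_subset hMS
    have hSMout : S \ M ∈ Fout := by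
      rw [hFout, mem_filter]
      refine ⟨hSM, ?_⟩
      rw [inter_comm]; exact hMdisj
    have houter := IH (S \ M).card hSMlt (S \ M) (Fout.erase (S \ M)) rfl
      (fun A hA => by
        rw [mem_erase] at hA
        exact ⟨houtmem A hA.2, (hmem A (by rw [hFout, mem_filter] at hA; exact hA.2.1)).2.1, hA.1⟩)
      (fun A hA B hB => hlam A (by rw [mem_erase, hFout, mem_filter] at hA; exact hA.2.1)
        B (by rw [mem_erase, hFout, mem_filter] at hB; exact hB.2.1))
    have hFoutCard : Fout.card ≤ (S \ M).card - 1 := by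
      have := houter.1
      have h2 : (Fout.erase (S \ M)).card = Fout.card - 1 := card_erase_of_mem hSMout
      have h3 : 1 ≤ Fout.card := card_pos.mpr ⟨S \ M, hSMout⟩
      have h4 : 2 ≤ (S \ M).card := (hmem _ hSM).2.1
      omega
    have hSM2 : 2 ≤ (S \ M).card := (hmem _ hSM).2.1
    constructor
    · rw [hcardFF]
      rw [hSMcard] at hFoutCard hSM2
      omega
    · intro _ _
      exact ⟨M, hM, S \ M, hSM, hMdisj, Or.inr hMun⟩
  · -- S \ M ∉ F
    have houter := IH (S \ M).card hSMlt (S \ M) Fout rfl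
      (fun A hA => ⟨houtmem A hA, (hmem A (by rw [hFout, mem_filter] at hA; exact hA.1)).2.1,
        fun hAeq => hSM (hAeq ▸ (by rw [hFout, mem_filter] at hA; exact hA.1))⟩)
      (fun A hA B hB => hlam A (by rw [hFout, mem_filter] at hA; exact hA.1)
        B (by rw [hFout, mem_filter] at hB; exact hB.1))
    have hFoutCard : Fout.card ≤ (S \ M).card - 2 := houter.1
    rw [hSMcard] at hFoutCard
    constructor
    · omega
    · intro hcard hdp
      -- then S \ M small: Fout empty, M.card = m-1, inner full
      rcases Nat.lt_or_ge (m - M.card) 2 with hsmall | hbig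
      · -- Fout empty
        have hFoutEmpty : Fout = ∅ := by
          rcases Fout.eq_empty_or_nonempty with h|h
          · exact h
          · obtain ⟨A, hA⟩ := h
            have h1 := houtmem A hA
            have h2 := (hmem A (by rw [hFout, mem_filter] at hA; exact hA.1)).2.1
            have := card_le_card h1
            rw [hSMcard] at this
            omega
        have hFinFull : (Fin'.erase M).card = M.card - 2 := by
          have h1 := hinner.1
          have h2 : (Fin'.erase M).card = Fin'.card - 1 := card_erase_of_mem hMin
          rw [hFoutEmpty] at hcardFF
          simp at hcardFF
          omega
        -- the disjoint pair lies in Fin'.erase M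
        obtain ⟨A, hA, B, hB, hAB⟩ := hdp
        have hin : ∀ X ∈ F, X ∩ M = ∅ → False := by
          intro X hX hXM
          have : X ∈ Fout := by rw [hFout, mem_filter]; exact ⟨hX, hXM⟩
          rw [hFoutEmpty] at this
          exact notMem_empty X this
        have hAM : A ≠ M → A ∈ Fin'.erase M := by
          intro hne'
          rcases hsplit A hA with h|h|h
          · exact absurd h hne'
          · rw [mem_erase, hFin', mem_filter]; exact ⟨hne', hA, h⟩
          · exact absurd h (fun h' => hin A hA h')
        have hBM : B ≠ M → B ∈ Fin'.erase M := by
          intro hne'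
          rcases hsplit B hB with h|h|h
          · exact absurd h hne'
          · rw [mem_erase, hFin', mem_filter]; exact ⟨hne', hB, h⟩
          · exact absurd h (fun h' => hin B hB h')
        have hAneM : A ≠ M := by
          rintro rfl
          have hBneM : B ≠ A := by
            rintro rfl
            have h5 := (hmem B hB).2.1
            have h6 : B = ∅ := by rw [← hAB, inter_self]
            rw [h6, card_empty] at h5
            omega
          have hB' := hBM hBneM
          rw [mem_erase, hFin', mem_filter] at hB'
          -- B ⊆ M = A and A ∩ B = ∅ ⇒ B empty
          have h6 : B = ∅ := by
            ext x; simp only [notMem_empty, iff_false]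
            intro hx
            exact (notMem_empty x) (hAB ▸ mem_inter.mpr ⟨hB'.2.2 hx, hx⟩)
          have h5 := (hmem B hB).2.1
          rw [h6, card_empty] at h5
          omega
        have hBneM : B ≠ M := by
          rintro rfl
          have hA' := hAM hAneM
          rw [mem_erase, hFin', mem_filter] at hA'
          have h6 : A = ∅ := by
            ext x; simp only [notMem_empty, iff_false]
            intro hx
            exact (notMem_empty x) (hAB ▸ mem_inter.mpr ⟨hx, hA'.2.2 hx⟩)
          have h5 := (hmem A hA).2.1
          rw [h6, card_empty] at h5
          omega
        obtain ⟨A', hA', B', hB', hd, hu⟩ := (hinner.2 hFinFull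
          ⟨A, hAM hAneM, B, hBM hBneM, hAB⟩)
        have hmemF : ∀ X ∈ Fin'.erase M, X ∈ F := by
          intro X hX; rw [mem_erase, hFin', mem_filter] at hX; exact hX.2.1
        refine ⟨A', hmemF A' hA', B', hmemF B' hB', hd, ?_⟩
        rcases hu with h|h
        · exact Or.inl (hmemF _ h)
        · exact Or.inl (h ▸ hM)
      · -- big complement but S\M not in F: bound is m-3, contradiction
        exfalso
        omega


lemma F_card (hn : 4 ≤ n) (T : TrivalentTree n) (z0 : Fin n) :
    (T.splits.filter (fun X => z0 ∉ X)).card = n - 3 := by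
  classical
  have h0 := Finset.card_filter_add_card_filter_not
    (s := T.splits) (p := fun X => z0 ∉ X)
  have h1 : T.splits.filter (fun X => ¬ z0 ∉ X) = T.splits.filter (fun X => z0 ∈ X) := by
    apply filter_congr; intro X _; simp
  rw [h1] at h0
  have hGimg : T.splits.filter (fun X => z0 ∈ X)
      = (T.splits.filter (fun X => z0 ∉ X)).image (fun X => univ \ X) := by
    ext M
    simp only [mem_filter, mem_image]
    constructor
    · rintro ⟨hM, hzM⟩
      refine ⟨univ \ M, ⟨T.compl_mem M hM, ?_⟩, compl_compl' M⟩
      rw [mem_sdiff]; push_neg; intro _; exact hzM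
    · rintro ⟨X, ⟨hX, hzX⟩, rfl⟩
      exact ⟨T.compl_mem X hX, mem_sdiff.mpr ⟨mem_univ _, hzX⟩⟩
  have hinj : Function.Injective (fun X : Finset (Fin n) => univ \ X) := by
    intro X Y h
    simp only at h
    rw [← compl_compl' X, ← compl_compl' Y, h]
  have h2 : (T.splits.filter (fun X => z0 ∈ X)).card
      = (T.splits.filter (fun X => z0 ∉ X)).card := by
    rw [hGimg, card_image_of_injective _ hinj]
  have h3 := T.card_eq
  omega

lemma sorted_threshold (g : Fin n → ℕ) (hg : Monotone g) (t j : ℕ)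
    (hj : (univ.filter fun i => t ≤ g i).card = j) (i : Fin n) :
    t ≤ g i ↔ n - j ≤ (i : ℕ) := by
  constructor
  · intro h
    by_contra hcon
    push_neg at hcon
    have hsub : Ici i ⊆ univ.filter (fun i' => t ≤ g i') := by
      intro i' hi'
      rw [mem_Ici] at hi'
      exact mem_filter.mpr ⟨mem_univ _, le_trans h (hg hi')⟩
    have hc := card_le_card hsub
    rw [Fin.card_Ici, hj] at hc
    have := i.isLt
    omega
  · intro h
    by_contra hcon
    push_neg at hcon
    have hsub : univ.filter (fun i' => t ≤ g i') ⊆ Ioi i := by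
      intro i' hi'
      rw [mem_filter] at hi'
      rw [mem_Ioi]
      by_contra h2
      push_neg at h2
      have h3 := hg h2
      omega
    have hc := card_le_card hsub
    rw [Fin.card_Ioi, hj] at hc
    have := i.isLt
    omega

lemma chain_caterpillar (hn : 4 ≤ n) (T : TrivalentTree n) (z0 : Fin n)
    (hchain : ∀ A ∈ T.splits, ∀ B ∈ T.splits, z0 ∉ A → z0 ∉ B → A ⊆ B ∨ B ⊆ A) :
    ∃ π : Fin n ≃ Fin n,
      T.splits =
        ((Finset.Icc 2 (n - 2)).image fun k =>
            Finset.univ.filter fun i => (π i : ℕ) < k) ∪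
        ((Finset.Icc 2 (n - 2)).image fun k =>
            Finset.univ.filter fun i => k ≤ (π i : ℕ)) := by
  classical
  set F := T.splits.filter (fun X => z0 ∉ X) with hF
  have hFmem : ∀ X : Finset (Fin n), X ∈ F ↔ X ∈ T.splits ∧ z0 ∉ X := by
    intro X; rw [hF, mem_filter]
  have hFcard : F.card = n - 3 := F_card hn T z0
  have hnested : ∀ A ∈ F, ∀ B ∈ F, A ⊆ B ∨ B ⊆ A := by
    intro A hA B hB
    exact hchain A ((hFmem A).mp hA).1 B ((hFmem B).mp hB).1 ((hFmem A).mp hA).2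
      ((hFmem B).mp hB).2
  have hsizeinj : ∀ A ∈ F, ∀ B ∈ F, A.card = B.card → A = B := by
    intro A hA B hB h
    rcases hnested A hA B hB with h'|h'
    · exact eq_of_subset_of_card_le h' h.ge
    · exact (eq_of_subset_of_card_le h' h.le).symm
  have himgsub : F.image card ⊆ Icc 2 (n - 2) := by
    intro j hj
    obtain ⟨A, hA, rfl⟩ := mem_image.mp hj
    exact mem_Icc.mpr (T.card_le A ((hFmem A).mp hA).1)
  have hicc : (Icc 2 (n - 2)).card = n - 3 := by rw [Nat.card_Icc]; omega
  have himgcard : (F.image card).card = n - 3 := by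
    rw [card_image_of_injOn (fun A hA B hB h => hsizeinj A hA B hB h), hFcard]
  have himg : F.image card = Icc 2 (n - 2) :=
    eq_of_subset_of_card_le himgsub (by rw [hicc, himgcard])
  have hexists : ∀ j, 2 ≤ j → j ≤ n - 2 → ∃ A ∈ F, A.card = j := by
    intro j h2 h3
    have : j ∈ F.image card := himg ▸ mem_Icc.mpr ⟨h2, h3⟩
    obtain ⟨A, hA, h⟩ := mem_image.mp this
    exact ⟨A, hA, h⟩
  set d : Fin n → ℕ := fun x => (F.filter (fun X => x ∈ X)).card with hd
  have hdlow : ∀ A ∈ F, ∀ x ∈ A, n - 1 - A.card ≤ d x := by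
    intro A hA x hx
    have hcardA := T.card_le A ((hFmem A).mp hA).1
    have hsurj : Set.SurjOn (fun X : Finset (Fin n) => X.card)
        ↑(F.filter (fun X => x ∈ X)) ↑(Icc A.card (n - 2)) := by
      intro j hj
      simp only [Finset.coe_Icc, Set.mem_Icc] at hj
      obtain ⟨X, hX, hXc⟩ := hexists j (le_trans hcardA.1 hj.1) hj.2
      have hAX : A ⊆ X := by
        rcases hnested A hA X hX with h|h
        · exact h
        · have h4 : X = A := eq_of_subset_of_card_le h (by omega)
          rw [h4]
      refine ⟨X, ?_, hXc⟩
      simp only [Finset.mem_coe, mem_filter]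
      exact ⟨hX, hAX hx⟩
    have hle := card_le_card_of_surjOn _ hsurj
    rw [Nat.card_Icc] at hle
    simp only [hd]
    omega
  have hdhigh : ∀ A ∈ F, ∀ x, x ∉ A → d x ≤ n - 2 - A.card := by
    intro A hA x hx
    have hsub : F.filter (fun X => x ∈ X) ⊆ F.filter (fun X => A.card < X.card) := by
      intro X hX
      rw [mem_filter] at hX ⊢
      refine ⟨hX.1, ?_⟩
      have hAX : A ⊆ X := by
        rcases hnested A hA X hX.1 with h|h
        · exact h
        · exact absurd (h hX.2) hx
      have : A ≠ X := fun h => hx (h ▸ hX.2)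
      exact card_lt_card (lt_of_le_of_ne hAX this)
    have hle2 : (F.filter (fun X => A.card < X.card)).card ≤ (Icc (A.card + 1) (n - 2)).card := by
      apply card_le_card_of_injOn (fun X => X.card)
      · intro X hX
        rw [Finset.mem_coe, mem_filter] at hX
        exact mem_Icc.mpr ⟨hX.2, (T.card_le X ((hFmem X).mp hX.1).1).2⟩
      · intro X hX Y hY h
        simp only [Finset.mem_coe, mem_filter] at hX hY
        exact hsizeinj X hX.1 Y hY.1 h
    rw [Nat.card_Icc] at hle2
    have := le_trans (card_le_card hsub) hle2
    simp only [hd]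
    omega
  set key : Fin n → ℕ := fun x => if x = z0 then 0 else 2 * d x + 1 with hkeydef
  have hkeyA : ∀ A ∈ F, ∀ x, x ∈ A ↔ 2 * (n - 1 - A.card) + 1 ≤ key x := by
    intro A hA x
    have hcardA := T.card_le A ((hFmem A).mp hA).1
    by_cases hx : x = z0
    · subst hx
      simp only [hkeydef]
      simp only [if_true]
      constructor
      · intro h; exact absurd h ((hFmem A).mp hA).2
      · intro h; omega
    · simp only [hkeydef]
      rw [if_neg hx]
      constructor
      · intro h
        have := hdlow A hA x h
        omega
      · intro h
        by_contra hxA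
        have := hdhigh A hA x hxA
        omega
  set σ := Tuple.sort key with hσ
  have hmono : Monotone (fun i => key (σ i)) := Tuple.monotone_sort key
  have hfiltercard : ∀ A ∈ F,
      (univ.filter (fun i => 2 * (n - 1 - A.card) + 1 ≤ key (σ i))).card = A.card := by
    intro A hA
    have h1 : (univ.filter (fun x => 2 * (n - 1 - A.card) + 1 ≤ key x)) = A := by
      ext x
      rw [mem_filter]
      constructor
      · rintro ⟨_, h⟩; exact (hkeyA A hA x).mpr h
      · intro h; exact ⟨mem_univ x, (hkeyA A hA x).mp h⟩
    have h2 : (univ.filter (fun i => 2 * (n - 1 - A.card) + 1 ≤ key (σ i)))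
        = (univ.filter (fun x => 2 * (n - 1 - A.card) + 1 ≤ key x)).image σ.symm := by
      ext i
      simp only [mem_image, mem_filter, mem_univ, true_and]
      constructor
      · intro h; exact ⟨σ i, h, σ.symm_apply_apply i⟩
      · rintro ⟨j, hj, rfl⟩; rwa [Equiv.apply_symm_apply]
    rw [h2, card_image_of_injective _ σ.symm.injective, h1]
  have hthr : ∀ A ∈ F, ∀ x : Fin n, x ∈ A ↔ n - A.card ≤ ((σ.symm x : Fin n) : ℕ) := by
    intro A hA x
    rw [hkeyA A hA x]
    have h3 := sorted_threshold (fun i => key (σ i)) hmono (2 * (n - 1 - A.card) + 1) A.card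
      (hfiltercard A hA) (σ.symm x)
    rwa [Equiv.apply_symm_apply] at h3
  refine ⟨σ.symm, ?_⟩
  ext X
  simp only [mem_union]
  constructor
  · intro hX
    by_cases hz : z0 ∈ X
    · -- prefix
      have hX0 : univ \ X ∈ F := (hFmem _).mpr ⟨T.compl_mem X hX, by
        rw [mem_sdiff]; push_neg; intro _; exact hz⟩
      have hc := T.card_le _ ((hFmem _).mp hX0).1
      refine Or.inl (mem_image.mpr ⟨n - (univ \ X).card, mem_Icc.mpr ⟨by omega, by omega⟩, ?_⟩)
      ext x
      rw [mem_filter]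
      constructor
      · rintro ⟨_, h⟩
        by_contra hxX
        have hmem2 : x ∈ univ \ X := mem_sdiff.mpr ⟨mem_univ _, hxX⟩
        have := (hthr _ hX0 x).mp hmem2
        omega
      · intro hx
        refine ⟨mem_univ _, ?_⟩
        have hnot : x ∉ univ \ X := fun h => (mem_sdiff.mp h).2 hx
        have h3 := mt (hthr _ hX0 x).mpr hnot
        omega
    · -- suffix
      have hXF : X ∈ F := (hFmem X).mpr ⟨hX, hz⟩
      have hc := T.card_le X hX
      refine Or.inr (mem_image.mpr ⟨n - X.card, mem_Icc.mpr ⟨by omega, by omega⟩, ?_⟩)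
      ext x
      rw [mem_filter]
      constructor
      · rintro ⟨_, h⟩; exact (hthr X hXF x).mpr h
      · intro h; exact ⟨mem_univ _, (hthr X hXF x).mp h⟩
  · intro hX
    have hsuffix : ∀ k, 2 ≤ k → k ≤ n - 2 →
        (univ.filter fun i : Fin n => k ≤ ((σ.symm i : Fin n) : ℕ)) ∈ T.splits ∧
        z0 ∉ (univ.filter fun i : Fin n => k ≤ ((σ.symm i : Fin n) : ℕ)) := by
      intro k hk1 hk2
      obtain ⟨A, hA, hAc⟩ := hexists (n - k) (by omega) (by omega)
      have hnk : n - A.card = k := by omega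
      have hAX : (univ.filter fun i : Fin n => k ≤ ((σ.symm i : Fin n) : ℕ)) = A := by
        ext x
        rw [mem_filter]
        constructor
        · rintro ⟨_, h2⟩
          exact (hthr A hA x).mpr (by rw [hnk]; exact h2)
        · intro h2
          refine ⟨mem_univ _, ?_⟩
          have := (hthr A hA x).mp h2
          omega
      rw [hAX]
      exact ⟨((hFmem A).mp hA).1, ((hFmem A).mp hA).2⟩
    rcases hX with h|h
    · obtain ⟨k, hk, rfl⟩ := mem_image.mp h
      rw [mem_Icc] at hk
      obtain ⟨hmem2, _⟩ := hsuffix k hk.1 hk.2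
      have heq : (univ.filter fun i : Fin n => ((σ.symm i : Fin n) : ℕ) < k)
          = univ \ (univ.filter fun i : Fin n => k ≤ ((σ.symm i : Fin n) : ℕ)) := by
        ext x
        simp only [mem_filter, mem_sdiff, mem_univ, true_and, not_le]
      rw [heq]
      exact T.compl_mem _ hmem2
    · obtain ⟨k, hk, rfl⟩ := mem_image.mp h
      rw [mem_Icc] at hk
      exact (hsuffix k hk.1 hk.2).1


end NNIProof

/-- Every trivalent tree with n ≥ 4 labeled leaves can be transformed into a
caterpillar by a finite sequence of NNI moves. -/
theorem reachable_caterpillar (n : ℕ) (hn : 4 ≤ n) (T : TrivalentTree n) :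
    ∃ T' : TrivalentTree n, IsCaterpillar T' ∧ (NNIGraph n).Reachable T T' := by
  classical
  have hn0 : 0 < n := by omega
  set z0 : Fin n := ⟨0, hn0⟩ with hz0
  have hbound : ∀ T0 : TrivalentTree n,
      (∑ X ∈ T0.splits.filter (fun X => z0 ∉ X), X.card) ≤ (n - 3) * (n - 2) := by
    intro T0
    have h1 : ∀ X ∈ T0.splits.filter (fun X => z0 ∉ X), X.card ≤ n - 2 :=
      fun X hX => (T0.card_le X (Finset.mem_filter.mp hX).1).2
    have h2 := Finset.sum_le_card_nsmul (T0.splits.filter (fun X => z0 ∉ X))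
      (fun X => X.card) (n - 2) h1
    rw [smul_eq_mul, NNIProof.F_card hn T0 z0] at h2
    exact h2
  suffices H : ∀ k, ∀ T0 : TrivalentTree n,
      (n - 3) * (n - 2) - (∑ X ∈ T0.splits.filter (fun X => z0 ∉ X), X.card) < k →
      ∃ T' : TrivalentTree n, IsCaterpillar T' ∧ (NNIGraph n).Reachable T0 T' by
    exact H ((n - 3) * (n - 2) - (∑ X ∈ T.splits.filter (fun X => z0 ∉ X), X.card) + 1)
      T (Nat.lt_succ_self _)
  intro k
  induction k with
  | zero => exact fun T0 h => absurd h (Nat.not_lt_zero _)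
  | succ k IH =>
    intro T0 hk
    by_cases hch : ∀ A ∈ T0.splits, ∀ B ∈ T0.splits, z0 ∉ A → z0 ∉ B → A ⊆ B ∨ B ⊆ A
    · obtain ⟨π, hπ⟩ := NNIProof.chain_caterpillar hn T0 z0 hch
      exact ⟨T0, ⟨π, hπ⟩, SimpleGraph.Reachable.refl T0⟩
    · push_neg at hch
      obtain ⟨A, hA, B, hB, hzA, hzB, hns1, hns2⟩ := hch
      have hABd : A ∩ B = ∅ := by
        rcases NNIProof.lam0 T0 z0 A hA B hB hzA hzB with h|h|h
        · exact absurd h hns1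
        · exact absurd h hns2
        · exact h
      have hScard : (Finset.univ \ {z0} : Finset (Fin n)).card = n - 1 := by
        rw [Finset.card_sdiff_of_subset (by simp), Finset.card_univ, Fintype.card_fin,
          Finset.card_singleton]
      have hstruct := NNIProof.laminar_struct (n - 1) (Finset.univ \ {z0})
        (T0.splits.filter (fun X => z0 ∉ X)) hScard
        (fun X hX => by
          rw [Finset.mem_filter] at hX
          refine ⟨?_, (T0.card_le X hX.1).1, ?_⟩
          · intro x hx
            rw [Finset.mem_sdiff, Finset.mem_singleton]
            exact ⟨Finset.mem_univ x, fun h => hX.2 (h ▸ hx)⟩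
          · intro h
            have h2 := (T0.card_le X hX.1).2
            rw [h, hScard] at h2
            omega)
        (fun X hX Y hY => by
          rw [Finset.mem_filter] at hX hY
          exact NNIProof.lam0 T0 z0 X hX.1 Y hY.1 hX.2 hY.2)
      obtain ⟨A', hA'm, B', hB'm, hd', hu'⟩ := hstruct.2
        (by rw [NNIProof.F_card hn T0 z0]; omega)
        ⟨A, Finset.mem_filter.mpr ⟨hA, hzA⟩, B, Finset.mem_filter.mpr ⟨hB, hzB⟩, hABd⟩
      have hA's : A' ∈ T0.splits := (Finset.mem_filter.mp hA'm).1
      have hzA' : z0 ∉ A' := (Finset.mem_filter.mp hA'm).2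
      have hB's : B' ∈ T0.splits := (Finset.mem_filter.mp hB'm).1
      have hzB' : z0 ∉ B' := (Finset.mem_filter.mp hB'm).2
      have hsib : A' ∪ B' ∈ T0.splits ∨ A' ∪ B' = Finset.univ \ {z0} := by
        rcases hu' with h|h
        · exact Or.inl (Finset.mem_filter.mp h).1
        · exact Or.inr h
      obtain ⟨A1, hA1sub, hA1ne, hA1neA, hA1lt, hA1part⟩ :=
        NNIProof.exists_part T0 z0 A' hA's (T0.card_le _ hA's).1
      obtain ⟨B1, hB1sub, hB1ne, hB1neB, hB1lt, hB1part⟩ :=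
        NNIProof.exists_part T0 z0 B' hB's (T0.card_le _ hB's).1
      have hrot : ∃ T1 : TrivalentTree n, (NNIGraph n).Adj T0 T1 ∧
          ∑ X ∈ T0.splits.filter (fun X => z0 ∉ X), X.card <
          ∑ X ∈ T1.splits.filter (fun X => z0 ∉ X), X.card := by
        rcases Nat.lt_or_ge A1.card B'.card with hlt | hge
        · exact NNIProof.rotation hn T0 z0 A' B' A1 hA's hzA' hB's hzB' hd' hsib
            hA1sub hA1ne hA1neA hA1part hlt
        · have hlt2 : B1.card < A'.card := by omega
          exact NNIProof.rotation hn T0 z0 B' A' B1 hB's hzB' hA's hzA'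
            (by rw [Finset.inter_comm]; exact hd') (by rw [Finset.union_comm]; exact hsib)
            hB1sub hB1ne hB1neB hB1part hlt2
      obtain ⟨T1, hadj, hphi⟩ := hrot
      have hb1 := hbound T1
      obtain ⟨T', hc, hr⟩ := IH T1 (by omega)
      exact ⟨T', hc, (hadj.reachable).trans hr⟩
end
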